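/- arXiv:2107.13188 — 2 statements merged into one kernel-verified Lean document; each statement's English description precedes it below -/
import Mathlib

section
/- Let n ≥ 1, let Θ ∈ ℂ^{n×n} be symmetric with positive definite real part, and let ν ∈ ℕⁿ. Then for every r ∈ ℝⁿ the Laplacian of HG_Θ^ν satisfies: Δ HG_Θ^ν(r) = −HG_Θ^ν(r)·tr(Θ⁻¹) + 2·tr(Θ⁻²·Φ_ν(r)) + (Θ⁻¹r)ᵀ·[ HG_Θ^ν(r)·Θ⁻¹r − 4·Θ⁻¹·φ_ν(r) ]. -/
open scoped BigOperators
open MeasureTheory Matrix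

noncomputable section

namespace AHGPaper

/-- Complex partial derivative in coordinate `j`. -/
def cpderiv {n : ℕ} (j : Fin n) (f : (Fin n → ℂ) → ℂ) : (Fin n → ℂ) → ℂ :=
  fun x => deriv (fun t : ℂ => f (Function.update x j t)) (x j)

/-- Mixed partial derivative of multi-order `ν`. -/
def mpderiv {n : ℕ} (ν : Fin n → ℕ) (f : (Fin n → ℂ) → ℂ) : (Fin n → ℂ) → ℂ :=
  (List.finRange n).foldr (fun j g => (cpderiv j)^[ν j] g) f

/-- The anisotropic Hermite-Gauss (AHG) function `HG_Θ^ν`. -/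
def HG {n : ℕ} (Θ : Matrix (Fin n) (Fin n) ℂ) (ν : Fin n → ℕ) (r : Fin n → ℂ) : ℂ :=
  (-(1 / (Real.sqrt 2 : ℂ))) ^ (∑ j, ν j) *
    ((∏ j, ((ν j).factorial : ℂ)) ^ (-(1 / 2 : ℂ))) *
    (((Real.pi : ℂ) ^ n * Θ.det) ^ (-(1 / 4 : ℂ))) *
    Complex.exp ((1 / 2 : ℂ) * (r ⬝ᵥ Θ⁻¹.mulVec r)) *
    mpderiv ν (fun x => Complex.exp (-(x ⬝ᵥ Θ⁻¹.mulVec x))) r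

/-- The dual anisotropic Hermite-Gauss function `H̃G_Θ^ν`. -/
def HGd {n : ℕ} (Θ : Matrix (Fin n) (Fin n) ℂ) (ν : Fin n → ℕ) (r : Fin n → ℂ) : ℂ :=
  (-(1 / (Real.sqrt 2 : ℂ))) ^ (∑ j, ν j) *
    ((∏ j, ((ν j).factorial : ℂ)) ^ (-(1 / 2 : ℂ))) *
    (((Real.pi : ℂ) ^ n * Θ.det) ^ (-(1 / 4 : ℂ))) *
    Complex.exp ((1 / 2 : ℂ) * ((Θ⁻¹.mulVec r) ⬝ᵥ Θ.mulVec (Θ⁻¹.mulVec r))) *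
    mpderiv ν (fun x => Complex.exp (-(x ⬝ᵥ Θ.mulVec x))) (Θ⁻¹.mulVec r)

/-- Physicists' Hermite polynomial via Rodrigues' formula. -/
def hermiteH (k : ℕ) (z : ℂ) : ℂ :=
  (-1) ^ k * Complex.exp (z ^ 2) * iteratedDeriv k (fun w => Complex.exp (-(w ^ 2))) z

/-- The `k`-th univariate Hermite-Gauss function `ψ_k`. -/
def psi (k : ℕ) (z : ℂ) : ℂ :=
  ((Real.sqrt Real.pi * 2 ^ k * k.factorial : ℝ) : ℂ) ^ (-(1 / 2 : ℂ)) *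
    Complex.exp (-(z ^ 2) / 2) * hermiteH k z

/-- The vector `φ_ν(r)` whose `k`-th entry is `(1/√2)·√(ν_k)·HG_Θ^{ν-ε_k}(r)`. -/
def phiV {n : ℕ} (Θ : Matrix (Fin n) (Fin n) ℂ) (ν : Fin n → ℕ) (r : Fin n → ℂ) :
    Fin n → ℂ :=
  fun k => (1 / (Real.sqrt 2 : ℂ)) * (Real.sqrt (ν k) : ℂ) *
    HG Θ (fun j => ν j - if j = k then 1 else 0) r

/-- The matrix `Φ_ν(r)`. -/
def PhiM {n : ℕ} (Θ : Matrix (Fin n) (Fin n) ℂ) (ν : Fin n → ℕ) (r : Fin n → ℂ) :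
    Matrix (Fin n) (Fin n) ℂ :=
  Matrix.of fun j k =>
    if j = k then
      (Real.sqrt (ν j * (ν j - 1)) : ℂ) * HG Θ (fun l => ν l - if l = j then 2 else 0) r
    else
      (Real.sqrt (ν j * ν k) : ℂ) *
        HG Θ (fun l => ν l - ((if l = j then 1 else 0) + (if l = k then 1 else 0))) r

/-- The `n`-dimensional linear canonical transform with parameter matrix `[[a,b],[c,d]]`. -/
def LCT {n : ℕ} (a b d : ℂ) (f : (Fin n → ℝ) → ℂ) (ζ : Fin n → ℝ) : ℂ :=
  (1 / (2 * (Real.pi : ℂ) * Complex.I * b)) ^ ((n : ℂ) / 2) *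
    Complex.exp (Complex.I * d / (2 * b) * ((fun i => (ζ i : ℂ)) ⬝ᵥ fun i => (ζ i : ℂ))) *
    ∫ r : Fin n → ℝ, f r *
      Complex.exp (-(Complex.I / (2 * b)) *
        ((fun i => (r i : ℂ)) ⬝ᵥ fun i => 2 * (ζ i : ℂ) - a * (r i : ℂ)))

/-- The `n`-dimensional Fourier transform `(2π)^{-n/2} ∫ f(r) e^{-i ζ·r} dr`. -/
def FT {n : ℕ} (f : (Fin n → ℝ) → ℂ) (ζ : Fin n → ℝ) : ℂ :=
  ((2 * Real.pi : ℝ) : ℂ) ^ (-(n : ℂ) / 2) *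
    ∫ r : Fin n → ℝ,
      f r * Complex.exp (-Complex.I * ((fun i => (ζ i : ℂ)) ⬝ᵥ fun i => (r i : ℂ)))

/-- The Wigner-Ville distribution. -/
def WVD {n : ℕ} (f : (Fin n → ℝ) → ℂ) (r ζ : Fin n → ℝ) : ℂ :=
  ((2 * Real.pi : ℝ) : ℂ) ^ (-(n : ℂ) / 2) *
    ∫ ξ : Fin n → ℝ,
      f (fun i => r i - ξ i / 2) * (starRingEnd ℂ) (f (fun i => r i + ξ i / 2)) *
        Complex.exp (-Complex.I * ((fun i => (ζ i : ℂ)) ⬝ᵥ fun i => (ξ i : ℂ)))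

end AHGPaper


namespace AHGProof
open MvPolynomial Matrix AHGPaper
variable {n : ℕ}

/-- pderiv commutes. -/
lemma pderiv_comm' (i j : Fin n) (p : MvPolynomial (Fin n) ℂ) :
    pderiv i (pderiv j p) = pderiv j (pderiv i p) := by
  induction p using MvPolynomial.induction_on' with
  | monomial s a =>
    simp only [pderiv_monomial]
    rcases eq_or_ne i j with rfl | hij
    · rfl
    · have hs : s - (Finsupp.single j 1 : Fin n →₀ ℕ) - Finsupp.single i 1
          = s - Finsupp.single i 1 - Finsupp.single j 1 := by
        ext k
        simp only [Finsupp.coe_tsub, Pi.sub_apply]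
        omega
      have h1 : (s - (Finsupp.single j 1 : Fin n →₀ ℕ)) i = s i := by
        simp [Finsupp.sub_apply, Finsupp.single_apply, hij.symm]
      have h2 : (s - (Finsupp.single i 1 : Fin n →₀ ℕ)) j = s j := by
        simp [Finsupp.sub_apply, Finsupp.single_apply, hij]
      rw [hs, h1, h2]
      congr 1
      ring
  | add p q hp hq => simp [hp, hq]

/-- derivative of a polynomial along coordinate update -/
lemma hasDerivAt_eval_update (p : MvPolynomial (Fin n) ℂ) (x : Fin n → ℂ) (k : Fin n) :
    HasDerivAt (fun t => eval (Function.update x k t) p) (eval x (pderiv k p)) (x k) := by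
  induction p using MvPolynomial.induction_on with
  | C a => simpa using hasDerivAt_const (x k) a
  | add p q hp hq => simpa using hp.fun_add hq
  | mul_X p i hp =>
    rcases eq_or_ne i k with rfl | hik
    · have h := hp.fun_mul (hasDerivAt_id (x i))
      simp only [id_eq, Function.update_eq_self, mul_one] at h
      simp only [eval_mul, eval_X, Function.update_self, pderiv_mul, pderiv_X_self, mul_one,
        map_add, eval_add]
      convert h using 1
    · have h := hp.mul_const (x i)
      simp only [eval_mul, eval_X, Function.update_of_ne hik, pderiv_mul,
        pderiv_X_of_ne hik, mul_zero, add_zero, eval_add, map_add]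
      convert h using 1



def Lk (A : Matrix (Fin n) (Fin n) ℂ) (k : Fin n) : MvPolynomial (Fin n) ℂ :=
  ∑ l, C (A k l) * X l

def Qp (A : Matrix (Fin n) (Fin n) ℂ) : MvPolynomial (Fin n) ℂ :=
  ∑ i, ∑ j, C (A i j) * X i * X j

lemma eval_Lk (A : Matrix (Fin n) (Fin n) ℂ) (k : Fin n) (x : Fin n → ℂ) :
    eval x (Lk A k) = A.mulVec x k := by
  simp [Lk, Matrix.mulVec, dotProduct]

lemma eval_Qp (A : Matrix (Fin n) (Fin n) ℂ) (x : Fin n → ℂ) :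
    eval x (Qp A) = x ⬝ᵥ A.mulVec x := by
  simp only [Qp, map_sum, eval_mul, eval_C, eval_X, dotProduct, Matrix.mulVec,
    Finset.mul_sum]
  exact Finset.sum_congr rfl fun i _ => Finset.sum_congr rfl fun j _ => by ring

lemma pderiv_Lk (A : Matrix (Fin n) (Fin n) ℂ) (k j : Fin n) :
    pderiv j (Lk A k) = C (A k j) := by
  rw [Lk, map_sum, Finset.sum_eq_single j]
  · rw [pderiv_C_mul, pderiv_X_self, mul_one]
  · intro l _ hl; rw [pderiv_C_mul, pderiv_X_of_ne hl, mul_zero]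
  · simp

lemma pderiv_Qp (A : Matrix (Fin n) (Fin n) ℂ) (hA : ∀ i j, A i j = A j i) (k : Fin n) :
    pderiv k (Qp A) = C 2 * Lk A k := by
  have h : ∀ i j : Fin n, pderiv k (C (A i j) * X i * X j)
      = (if i = k then C (A i j) * X j else 0) + (if j = k then C (A i j) * X i else 0) := by
    intro i j
    by_cases hi : i = k
    · by_cases hj : j = k
      · subst hi; subst hj
        simp [pderiv_mul, pderiv_X_self, pderiv_C]; ring
      · subst hi
        simp [pderiv_mul, pderiv_X_self, pderiv_X_of_ne hj, hj]; try ring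
    · by_cases hj : j = k
      · subst hj
        simp [pderiv_mul, pderiv_X_self, pderiv_X_of_ne hi, hi]; try ring
      · simp [pderiv_mul, pderiv_X_of_ne hi, pderiv_X_of_ne hj, hi, hj]
  rw [Qp, map_sum]
  simp_rw [map_sum, h, Finset.sum_add_distrib]
  have e1 : (∑ i : Fin n, ∑ j : Fin n, if i = k then C (A i j) * X j else 0) = Lk A k := by
    rw [Finset.sum_eq_single k]
    · simp [Lk]
    · intro b _ hb; simp [hb]
    · simp
  have e2 : (∑ i : Fin n, ∑ j : Fin n, if j = k then C (A i j) * X i else 0) = Lk A k := by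
    simp_rw [Finset.sum_ite_eq' Finset.univ k, Finset.mem_univ, if_true, Lk]
    exact Finset.sum_congr rfl fun i _ => by rw [hA i k]
  rw [e1, e2]
  have hC2 : (C 2 : MvPolynomial (Fin n) ℂ) = 2 := by
    simp [map_ofNat]
  rw [hC2, two_mul]

/-- key: cpderiv of (polynomial × exp(polynomial)) -/
lemma cpderiv_eval_exp (p q : MvPolynomial (Fin n) ℂ) (k : Fin n) :
    cpderiv k (fun x => eval x p * Complex.exp (eval x q)) =
      fun x => eval x (pderiv k p + pderiv k q * p) * Complex.exp (eval x q) := by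
  funext x
  have h1 := hasDerivAt_eval_update p x k
  have h2 := (hasDerivAt_eval_update q x k).cexp
  have h := h1.mul h2
  rw [cpderiv]
  rw [HasDerivAt.deriv (f := fun t => eval (Function.update x k t) p * Complex.exp (eval (Function.update x k t) q)) h]
  simp only [Function.update_eq_self, eval_add, eval_mul]
  ring


/-! ### The polynomial recursion -/

def Dfull (A : Matrix (Fin n) (Fin n) ℂ) (k : Fin n) (p : MvPolynomial (Fin n) ℂ) :
    MvPolynomial (Fin n) ℂ :=
  pderiv k p - C 2 * Lk A k * p

def ee (l : Fin n) : Fin n → ℕ := fun j => if j = l then 1 else 0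

def Pfold (A : Matrix (Fin n) (Fin n) ℂ) (ν : Fin n → ℕ) (l : List (Fin n))
    (p : MvPolynomial (Fin n) ℂ) : MvPolynomial (Fin n) ℂ :=
  l.foldr (fun j q => (Dfull A j)^[ν j] q) p

def Pol (A : Matrix (Fin n) (Fin n) ℂ) (ν : Fin n → ℕ) : MvPolynomial (Fin n) ℂ :=
  Pfold A ν (List.finRange n) 1

lemma Dfull_comm (A : Matrix (Fin n) (Fin n) ℂ) (hA : ∀ i j, A i j = A j i) (j k : Fin n)
    (p : MvPolynomial (Fin n) ℂ) : Dfull A j (Dfull A k p) = Dfull A k (Dfull A j p) := by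
  simp only [Dfull, map_sub, pderiv_mul, pderiv_C_mul, pderiv_Lk, pderiv_C]
  rw [pderiv_comm' j k p, hA k j]
  ring

lemma Dfull_iterate_comm (A : Matrix (Fin n) (Fin n) ℂ) (hA : ∀ i j, A i j = A j i)
    (j k : Fin n) (m : ℕ) (p : MvPolynomial (Fin n) ℂ) :
    (Dfull A j)^[m] (Dfull A k p) = Dfull A k ((Dfull A j)^[m] p) := by
  induction m with
  | zero => rfl
  | succ m ih => rw [Function.iterate_succ_apply', Function.iterate_succ_apply', ih,
      Dfull_comm A hA]

lemma Pfold_comm (A : Matrix (Fin n) (Fin n) ℂ) (hA : ∀ i j, A i j = A j i)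
    (ν : Fin n → ℕ) (k : Fin n) (l : List (Fin n)) (p : MvPolynomial (Fin n) ℂ) :
    Pfold A ν l (Dfull A k p) = Dfull A k (Pfold A ν l p) := by
  induction l with
  | nil => rfl
  | cons j t ih => simp only [Pfold, List.foldr_cons] at *; rw [ih, Dfull_iterate_comm A hA]

lemma Pfold_congr (A : Matrix (Fin n) (Fin n) ℂ) (ν μ : Fin n → ℕ) (l : List (Fin n))
    (h : ∀ j ∈ l, ν j = μ j) (p : MvPolynomial (Fin n) ℂ) :
    Pfold A ν l p = Pfold A μ l p := by
  induction l with
  | nil => rfl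
  | cons j t ih =>
    simp only [Pfold, List.foldr_cons] at *
    rw [ih (fun a ha => h a (List.mem_cons_of_mem _ ha)), h j List.mem_cons_self]

lemma Pfold_add_single (A : Matrix (Fin n) (Fin n) ℂ) (hA : ∀ i j, A i j = A j i)
    (ν : Fin n → ℕ) (k : Fin n) (l : List (Fin n)) (hk : k ∈ l) (hnd : l.Nodup)
    (p : MvPolynomial (Fin n) ℂ) :
    Pfold A (ν + ee k) l p = Dfull A k (Pfold A ν l p) := by
  induction l with
  | nil => simp at hk
  | cons j t ih =>
    have hnd' := List.nodup_cons.mp hnd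
    rcases List.mem_cons.mp hk with rfl | hkt
    · show (Dfull A k)^[(ν + ee k) k] (Pfold A (ν + ee k) t p)
          = Dfull A k ((Dfull A k)^[ν k] (Pfold A ν t p))
      have h1 : Pfold A (ν + ee k) t p = Pfold A ν t p := by
        apply Pfold_congr
        intro a ha
        have hak : a ≠ k := fun h => hnd'.1 (h ▸ ha)
        simp [ee, hak, Pi.add_apply]
      have h2 : (ν + ee k) k = ν k + 1 := by simp [ee, Pi.add_apply]
      rw [h1, h2, Function.iterate_succ_apply']
    · have hj : j ≠ k := fun h => hnd'.1 (h ▸ hkt)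
      show (Dfull A j)^[(ν + ee k) j] (Pfold A (ν + ee k) t p)
          = Dfull A k ((Dfull A j)^[ν j] (Pfold A ν t p))
      have h2 : (ν + ee k) j = ν j := by simp [ee, hj, Pi.add_apply]
      rw [h2, ih hkt hnd'.2]
      exact Dfull_iterate_comm A hA j k (ν j) _

lemma Pol_add_single (A : Matrix (Fin n) (Fin n) ℂ) (hA : ∀ i j, A i j = A j i)
    (ν : Fin n → ℕ) (k : Fin n) :
    Pol A (ν + ee k) = Dfull A k (Pol A ν) :=
  Pfold_add_single A hA ν k _ (List.mem_finRange k) (List.nodup_finRange n) 1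

lemma Pfold_zero (A : Matrix (Fin n) (Fin n) ℂ) (l : List (Fin n)) (p : MvPolynomial (Fin n) ℂ) :
    Pfold A 0 l p = p := by
  induction l with
  | nil => rfl
  | cons j t ih => simp only [Pfold, List.foldr_cons] at *; rw [ih]; rfl

lemma Pol_zero (A : Matrix (Fin n) (Fin n) ℂ) : Pol A 0 = 1 := Pfold_zero A _ 1

lemma sub_add_cancel_idx (μ : Fin n → ℕ) (j : Fin n) : (μ + ee j) - ee j = μ := by
  funext a; simp only [Pi.add_apply, Pi.sub_apply, ee]; split_ifs <;> omega

lemma pderiv_Pol (A : Matrix (Fin n) (Fin n) ℂ) (hA : ∀ i j, A i j = A j i)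
    (ν : Fin n → ℕ) (k : Fin n) :
    pderiv k (Pol A ν) = -∑ l, C (2 * A k l * (ν l : ℂ)) * Pol A (ν - ee l) := by
  suffices H : ∀ (N : ℕ) (ν : Fin n → ℕ), (∑ j, ν j) = N → ∀ k,
      pderiv k (Pol A ν) = -∑ l, C (2 * A k l * (ν l : ℂ)) * Pol A (ν - ee l) from
    H _ ν rfl k
  intro N
  induction N using Nat.strong_induction_on with
  | _ N ih =>
    intro ν hν k
    by_cases h0 : ν = 0
    · subst h0
      simp [Pol_zero]
    · have hex : ∃ j, 0 < ν j := by
        by_contra hc; push_neg at hc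
        exact h0 (funext fun j => Nat.le_zero.mp (hc j))
      obtain ⟨j, hj⟩ := hex
      set μ := ν - ee j with hμ
      have hνμ : ν = μ + ee j := by
        funext a; simp only [hμ, Pi.add_apply, Pi.sub_apply, ee]
        split_ifs with h
        · subst h; omega
        · omega
      have hsum : (∑ i, ν i) = (∑ i, μ i) + 1 := by
        rw [hνμ]
        simp only [Pi.add_apply]
        rw [Finset.sum_add_distrib]
        congr 1
        simp [ee]
      have IH := ih (∑ i, μ i) (by omega) μ rfl
      rw [hνμ, Pol_add_single A hA μ j]
      simp only [Dfull, map_sub, pderiv_mul, pderiv_C_mul, pderiv_Lk, pderiv_C]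
      rw [pderiv_comm' k j (Pol A μ)]
      simp only [IH k]
      rw [map_neg, map_sum]
      simp only [pderiv_C_mul]
      have hD : ∀ l, pderiv j (Pol A (μ - ee l))
          = Pol A ((μ - ee l) + ee j) + C 2 * Lk A j * Pol A (μ - ee l) := by
        intro l; rw [Pol_add_single A hA (μ - ee l) j, Dfull]; ring
      simp only [hD]
      have hidx : ∀ l, C (2 * A k l * (μ l : ℂ)) * Pol A ((μ - ee l) + ee j)
          = C (2 * A k l * (μ l : ℂ)) * Pol A ((μ + ee j) - ee l) := by
        intro l
        rcases Nat.eq_zero_or_pos (μ l) with h | h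
        · simp [h]
        · have heq : (μ - ee l) + ee j = (μ + ee j) - ee l := by
            funext a
            simp only [Pi.add_apply, Pi.sub_apply, ee]
            by_cases hal : a = l
            · subst hal; split_ifs <;> omega
            · split_ifs <;> omega
          rw [heq]
      simp only [mul_add, Finset.sum_add_distrib]
      simp only [hidx]
      have hmix : (∑ l, C (2 * A k l * (μ l : ℂ)) * (C 2 * Lk A j * Pol A (μ - ee l)))
          = C 2 * Lk A j * ∑ l, C (2 * A k l * (μ l : ℂ)) * Pol A (μ - ee l) := by
        rw [Finset.mul_sum]
        exact Finset.sum_congr rfl fun l _ => by ring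
      rw [hmix]
      have hsplit : ∀ l : Fin n, C (2 * A k l * (((μ + ee j) l : ℕ) : ℂ)) * Pol A ((μ + ee j) - ee l)
          = C (2 * A k l * (μ l : ℂ)) * Pol A ((μ + ee j) - ee l)
            + (if l = j then C (2 * A k l) * Pol A ((μ + ee j) - ee l) else 0) := by
        intro l
        by_cases hlj : l = j
        · subst hlj
          have h1 : ((μ + ee l) l : ℕ) = μ l + 1 := by simp [ee, Pi.add_apply]
          rw [h1, if_pos rfl]
          push_cast
          rw [mul_add, mul_one, map_add, add_mul]
        · have h1 : ((μ + ee j) l : ℕ) = μ l := by simp [ee, Pi.add_apply, hlj]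
          rw [h1, if_neg hlj, add_zero]
      simp only [hsplit]
      rw [Finset.sum_add_distrib, Finset.sum_ite_eq' Finset.univ j]
      simp only [Finset.mem_univ, if_true, sub_add_cancel_idx]
      rw [hA j k]
      have hCC : (C 2 : MvPolynomial (Fin n) ℂ) * C (A k j) = C (2 * A k j) := by
        rw [← MvPolynomial.C_mul]
      rw [hCC]
      ring

lemma pderiv2_Pol (A : Matrix (Fin n) (Fin n) ℂ) (hA : ∀ i j, A i j = A j i)
    (ν : Fin n → ℕ) (k : Fin n) :
    pderiv k (pderiv k (Pol A ν)) =
      ∑ l, ∑ m, C (4 * A k l * (ν l : ℂ) * A k m * (((ν - ee l) m : ℕ) : ℂ)) *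
        Pol A ((ν - ee l) - ee m) := by
  rw [pderiv_Pol A hA ν k, map_neg, map_sum]
  simp only [pderiv_C_mul]
  have h : ∀ l, C (2 * A k l * (ν l : ℂ)) * pderiv k (Pol A (ν - ee l))
      = -(∑ m, C (4 * A k l * (ν l : ℂ) * A k m * (((ν - ee l) m : ℕ) : ℂ)) *
          Pol A ((ν - ee l) - ee m)) := by
    intro l
    rw [pderiv_Pol A hA (ν - ee l) k, mul_neg, Finset.mul_sum]
    congr 1
    refine Finset.sum_congr rfl fun m _ => ?_
    rw [← mul_assoc, ← MvPolynomial.C_mul]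
    congr 2
    ring
  simp only [h, Finset.sum_neg_distrib, neg_neg]

def Dop (q : MvPolynomial (Fin n) ℂ) (k : Fin n) (p : MvPolynomial (Fin n) ℂ) :
    MvPolynomial (Fin n) ℂ :=
  pderiv k p + pderiv k q * p

lemma cpderiv_pE (q p : MvPolynomial (Fin n) ℂ) (k : Fin n) :
    cpderiv k (fun x => eval x p * Complex.exp (eval x q)) =
      fun x => eval x (Dop q k p) * Complex.exp (eval x q) :=
  cpderiv_eval_exp p q k

lemma cpderiv_iter_pE (q p : MvPolynomial (Fin n) ℂ) (k : Fin n) (m : ℕ) :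
    (cpderiv k)^[m] (fun x => eval x p * Complex.exp (eval x q)) =
      fun x => eval x ((Dop q k)^[m] p) * Complex.exp (eval x q) := by
  induction m generalizing p with
  | zero => rfl
  | succ m ih =>
    rw [Function.iterate_succ_apply, cpderiv_pE, ih, Function.iterate_succ_apply]

lemma foldr_pE (q p : MvPolynomial (Fin n) ℂ) (ν : Fin n → ℕ) (l : List (Fin n)) :
    l.foldr (fun j g => (cpderiv j)^[ν j] g) (fun x => eval x p * Complex.exp (eval x q)) =
      fun x => eval x (l.foldr (fun j p' => (Dop q j)^[ν j] p') p) * Complex.exp (eval x q) := by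
  induction l generalizing p with
  | nil => rfl
  | cons j t ih => rw [List.foldr_cons, ih, cpderiv_iter_pE, List.foldr_cons]

lemma Dop_neg_Qp (A : Matrix (Fin n) (Fin n) ℂ) (hA : ∀ i j, A i j = A j i) (k : Fin n) :
    Dop (-(Qp A)) k = Dfull A k := by
  funext p
  rw [Dop, Dfull, map_neg, pderiv_Qp A hA k]
  ring

lemma mpderiv_gauss (A : Matrix (Fin n) (Fin n) ℂ) (hA : ∀ i j, A i j = A j i)
    (ν : Fin n → ℕ) :
    mpderiv ν (fun x => Complex.exp (-(x ⬝ᵥ A.mulVec x))) =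
      fun x => eval x (Pol A ν) * Complex.exp (-(x ⬝ᵥ A.mulVec x)) := by
  have hg : (fun x : Fin n → ℂ => Complex.exp (-(x ⬝ᵥ A.mulVec x))) =
      fun x => eval x (1 : MvPolynomial (Fin n) ℂ) * Complex.exp (eval x (-(Qp A))) := by
    funext x
    rw [_root_.map_one, one_mul, _root_.map_neg, eval_Qp]
  rw [mpderiv, hg, foldr_pE]
  simp only [Dop_neg_Qp A hA]
  funext x
  rw [_root_.map_neg, eval_Qp]
  rfl

def qhalf (A : Matrix (Fin n) (Fin n) ℂ) : MvPolynomial (Fin n) ℂ :=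
  C (-(1/2 : ℂ)) * Qp A

lemma eval_qhalf (A : Matrix (Fin n) (Fin n) ℂ) (x : Fin n → ℂ) :
    eval x (qhalf A) = -(1/2 : ℂ) * (x ⬝ᵥ A.mulVec x) := by
  rw [qhalf, eval_mul, eval_C, eval_Qp]

lemma pderiv_qhalf (A : Matrix (Fin n) (Fin n) ℂ) (hA : ∀ i j, A i j = A j i) (k : Fin n) :
    pderiv k (qhalf A) = -(Lk A k) := by
  rw [qhalf, pderiv_C_mul, pderiv_Qp A hA k, ← mul_assoc, ← MvPolynomial.C_mul]
  norm_num

def Dhalf (A : Matrix (Fin n) (Fin n) ℂ) (k : Fin n) (p : MvPolynomial (Fin n) ℂ) :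
    MvPolynomial (Fin n) ℂ :=
  pderiv k p - Lk A k * p

lemma cpderiv_rep (A : Matrix (Fin n) (Fin n) ℂ) (hA : ∀ i j, A i j = A j i)
    (p : MvPolynomial (Fin n) ℂ) (k : Fin n) :
    cpderiv k (fun x => eval x p * Complex.exp (eval x (qhalf A))) =
      fun x => eval x (Dhalf A k p) * Complex.exp (eval x (qhalf A)) := by
  rw [cpderiv_eval_exp p (qhalf A) k]
  have h : pderiv k p + pderiv k (qhalf A) * p = Dhalf A k p := by
    rw [pderiv_qhalf A hA, Dhalf]; ring
  rw [h]

def Kc (Θ : Matrix (Fin n) (Fin n) ℂ) (ν : Fin n → ℕ) : ℂ :=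
  (-(1 / (Real.sqrt 2 : ℂ))) ^ (∑ j, ν j) *
    ((∏ j, ((ν j).factorial : ℂ)) ^ (-(1 / 2 : ℂ))) *
    (((Real.pi : ℂ) ^ n * Θ.det) ^ (-(1 / 4 : ℂ)))

lemma sum_split (ν : Fin n → ℕ) (l : Fin n) (hl : 0 < ν l) :
    (∑ j, ν j) = (∑ j, (ν - ee l) j) + 1 := by
  have h : ∀ j, ν j = (ν - ee l) j + (if j = l then 1 else 0) := by
    intro j; simp only [Pi.sub_apply, ee]; split_ifs with h
    · subst h; omega
    · omega
  calc (∑ j, ν j) = ∑ j, ((ν - ee l) j + if j = l then 1 else 0) :=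
        Finset.sum_congr rfl fun j _ => h j
    _ = (∑ j, (ν - ee l) j) + ∑ j, (if j = l then 1 else 0) := Finset.sum_add_distrib
    _ = (∑ j, (ν - ee l) j) + 1 := by
        rw [Finset.sum_ite_eq' Finset.univ l]; simp

lemma prod_factorial_split (ν : Fin n → ℕ) (l : Fin n) (hl : 0 < ν l) :
    (∏ j, (ν j).factorial) = ν l * ∏ j, ((ν - ee l) j).factorial := by
  obtain ⟨m, hm⟩ : ∃ m, ν l = m + 1 := ⟨ν l - 1, by omega⟩
  rw [← Finset.mul_prod_erase Finset.univ (fun j => (ν j).factorial) (Finset.mem_univ l),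
      ← Finset.mul_prod_erase Finset.univ (fun j => ((ν - ee l) j).factorial)
        (Finset.mem_univ l)]
  have h1 : (ν - ee l) l = m := by simp [Pi.sub_apply, ee, hm]
  have h2 : ∀ j ∈ Finset.univ.erase l, ((ν - ee l) j).factorial = (ν j).factorial := by
    intro j hj
    have hjl : j ≠ l := Finset.ne_of_mem_erase hj
    simp [Pi.sub_apply, ee, hjl]
  rw [Finset.prod_congr rfl h2, h1, hm, Nat.factorial_succ]
  ring

lemma rpow_key (a b : ℝ) (ha : 0 < a) (hb : 0 < b) :
    ((a : ℂ) * (b : ℂ)) ^ (-(1/2 : ℂ)) * (Real.sqrt a : ℂ) = (b : ℂ) ^ (-(1/2 : ℂ)) := by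
  have he : (-(1/2 : ℂ)) = ((-(1/2 : ℝ) : ℝ) : ℂ) := by norm_num
  rw [he, ← Complex.ofReal_mul, ← Complex.ofReal_cpow (by positivity) (-(1/2 : ℝ)),
    ← Complex.ofReal_cpow hb.le (-(1/2 : ℝ)), ← Complex.ofReal_mul]
  congr 1
  rw [Real.mul_rpow ha.le hb.le, Real.sqrt_eq_rpow]
  rw [mul_comm (a ^ (-(1/2:ℝ))) (b ^ (-(1/2:ℝ))), mul_assoc, ← Real.rpow_add ha]
  norm_num

lemma KK (Θ : Matrix (Fin n) (Fin n) ℂ) (ν : Fin n → ℕ) (l : Fin n) (hl : 0 < ν l) :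
    Kc Θ ν * (Real.sqrt (ν l) : ℂ) = -(1 / (Real.sqrt 2 : ℂ)) * Kc Θ (ν - ee l) := by
  have hprodN := prod_factorial_split ν l hl
  have hprod : (∏ j, ((ν j).factorial : ℂ))
      = ((ν l : ℝ) : ℂ) * (((∏ j, ((ν - ee l) j).factorial : ℕ) : ℝ) : ℂ) := by
    have := congrArg (Nat.cast : ℕ → ℂ) hprodN
    push_cast at this ⊢
    exact this
  have hb : (0:ℝ) < ((∏ j, ((ν - ee l) j).factorial : ℕ) : ℝ) := by
    exact_mod_cast Finset.prod_pos fun j _ => Nat.factorial_pos _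
  have ha : (0:ℝ) < (ν l : ℝ) := by exact_mod_cast hl
  have hprod2 : (((∏ j, ((ν - ee l) j).factorial : ℕ) : ℝ) : ℂ)
      = (∏ j, (((ν - ee l) j).factorial : ℂ)) := by push_cast; rfl
  rw [Kc, Kc, sum_split ν l hl, pow_succ, hprod, hprod2]
  have hkey := rpow_key (ν l : ℝ) (((∏ j, ((ν - ee l) j).factorial : ℕ) : ℝ)) ha hb
  rw [hprod2] at hkey
  calc (-(1 / (Real.sqrt 2:ℂ))) ^ (∑ j, (ν - ee l) j) * -(1 / (Real.sqrt 2:ℂ)) *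
        ((((ν l : ℝ):ℂ)) * (∏ j, (((ν - ee l) j).factorial : ℂ))) ^ (-(1/2 : ℂ)) *
        (((Real.pi : ℂ) ^ n * Θ.det) ^ (-(1 / 4 : ℂ))) * (Real.sqrt (ν l) : ℂ)
      = (-(1 / (Real.sqrt 2:ℂ))) * ((-(1 / (Real.sqrt 2:ℂ))) ^ (∑ j, (ν - ee l) j) *
        (((((ν l : ℝ):ℂ)) * (∏ j, (((ν - ee l) j).factorial : ℂ))) ^ (-(1/2 : ℂ)) *
          (Real.sqrt (ν l) : ℂ)) * (((Real.pi : ℂ) ^ n * Θ.det) ^ (-(1 / 4 : ℂ)))) := by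
        ring
    _ = _ := by rw [hkey]



lemma KK2 (Θ : Matrix (Fin n) (Fin n) ℂ) (ν : Fin n → ℕ) (l : Fin n) :
    Kc Θ ν * (ν l : ℂ) =
      -(1 / (Real.sqrt 2 : ℂ)) * (Real.sqrt (ν l) : ℂ) * Kc Θ (ν - ee l) := by
  rcases Nat.eq_zero_or_pos (ν l) with h | h
  · simp [h]
  · have h2 : ((ν l : ℂ)) = (Real.sqrt (ν l) : ℂ) * (Real.sqrt (ν l) : ℂ) := by
      rw [← Complex.ofReal_mul, Real.mul_self_sqrt (Nat.cast_nonneg _)]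
      norm_num
    rw [h2, ← mul_assoc, KK Θ ν l h]
    ring

lemma sqrt2_sq : (-(1 / (Real.sqrt 2 : ℂ))) * (-(1 / (Real.sqrt 2 : ℂ))) = (1/2 : ℂ) := by
  have h : ((Real.sqrt 2 : ℝ) : ℂ) * ((Real.sqrt 2 : ℝ) : ℂ) = 2 := by
    rw [← Complex.ofReal_mul, Real.mul_self_sqrt (by norm_num)]
    norm_num
  rw [neg_mul_neg, div_mul_div_comm, one_mul, h]

lemma KK3 (Θ : Matrix (Fin n) (Fin n) ℂ) (ν : Fin n → ℕ) (l m : Fin n) :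
    Kc Θ ν * (ν l : ℂ) * (((ν - ee l) m : ℕ) : ℂ) =
      (1/2 : ℂ) * (Real.sqrt (ν l) : ℂ) * (Real.sqrt ((ν - ee l) m) : ℂ) *
        Kc Θ ((ν - ee l) - ee m) := by
  rw [KK2 Θ ν l]
  have h := KK2 Θ (ν - ee l) m
  calc -(1 / (Real.sqrt 2:ℂ)) * (Real.sqrt (ν l) : ℂ) * Kc Θ (ν - ee l) * (((ν - ee l) m : ℕ) : ℂ)
      = -(1 / (Real.sqrt 2:ℂ)) * (Real.sqrt (ν l) : ℂ) *
        (Kc Θ (ν - ee l) * (((ν - ee l) m : ℕ) : ℂ)) := by ring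
    _ = -(1 / (Real.sqrt 2:ℂ)) * (Real.sqrt (ν l) : ℂ) *
        (-(1 / (Real.sqrt 2:ℂ)) * (Real.sqrt ((ν - ee l) m) : ℂ) * Kc Θ ((ν - ee l) - ee m)) := by
        rw [h]
    _ = (-(1 / (Real.sqrt 2:ℂ)) * -(1 / (Real.sqrt 2:ℂ))) * (Real.sqrt (ν l) : ℂ) *
        (Real.sqrt ((ν - ee l) m) : ℂ) * Kc Θ ((ν - ee l) - ee m) := by ring
    _ = _ := by rw [sqrt2_sq]

lemma HG_rep (Θ : Matrix (Fin n) (Fin n) ℂ) (hA : ∀ i j, Θ⁻¹ i j = Θ⁻¹ j i) (ν : Fin n → ℕ) :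
    HG Θ ν = fun x => eval x (C (Kc Θ ν) * Pol Θ⁻¹ ν) *
      Complex.exp (eval x (qhalf Θ⁻¹)) := by
  funext x
  rw [show HG Θ ν x = Kc Θ ν * Complex.exp ((1/2 : ℂ) * (x ⬝ᵥ Θ⁻¹.mulVec x)) *
      (mpderiv ν (fun y => Complex.exp (-(y ⬝ᵥ Θ⁻¹.mulVec y))) x) from by rw [HG, Kc]]
  rw [mpderiv_gauss Θ⁻¹ hA ν]
  rw [eval_mul, eval_C, eval_qhalf]
  have hexp : Complex.exp ((1/2:ℂ) * (x ⬝ᵥ Θ⁻¹.mulVec x)) *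
      Complex.exp (-(x ⬝ᵥ Θ⁻¹.mulVec x)) =
      Complex.exp (-(1/2:ℂ) * (x ⬝ᵥ Θ⁻¹.mulVec x)) := by
    rw [← Complex.exp_add]; congr 1; ring
  calc Kc Θ ν * Complex.exp ((1/2:ℂ) * (x ⬝ᵥ Θ⁻¹.mulVec x)) *
        (eval x (Pol Θ⁻¹ ν) * Complex.exp (-(x ⬝ᵥ Θ⁻¹.mulVec x)))
      = Kc Θ ν * eval x (Pol Θ⁻¹ ν) *
        (Complex.exp ((1/2:ℂ) * (x ⬝ᵥ Θ⁻¹.mulVec x)) *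
          Complex.exp (-(x ⬝ᵥ Θ⁻¹.mulVec x))) := by ring
    _ = _ := by rw [hexp]

lemma Dhalf_C_mul (A : Matrix (Fin n) (Fin n) ℂ) (k : Fin n) (a : ℂ)
    (p : MvPolynomial (Fin n) ℂ) : Dhalf A k (C a * p) = C a * Dhalf A k p := by
  rw [Dhalf, Dhalf, pderiv_C_mul]; ring

lemma cpderiv2_HG (Θ : Matrix (Fin n) (Fin n) ℂ) (hA : ∀ i j, Θ⁻¹ i j = Θ⁻¹ j i)
    (ν : Fin n → ℕ) (k : Fin n) :
    cpderiv k (cpderiv k (HG Θ ν)) =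
      fun x => eval x (C (Kc Θ ν) * Dhalf Θ⁻¹ k (Dhalf Θ⁻¹ k (Pol Θ⁻¹ ν))) *
        Complex.exp (eval x (qhalf Θ⁻¹)) := by
  rw [HG_rep Θ hA ν, cpderiv_rep Θ⁻¹ hA _ k, cpderiv_rep Θ⁻¹ hA _ k,
    Dhalf_C_mul, Dhalf_C_mul]

lemma eval_Dhalf2 (A : Matrix (Fin n) (Fin n) ℂ) (ν : Fin n → ℕ) (k : Fin n)
    (x : Fin n → ℂ) :
    eval x (Dhalf A k (Dhalf A k (Pol A ν))) =
      eval x (pderiv k (pderiv k (Pol A ν)))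
      - A k k * eval x (Pol A ν)
      - 2 * eval x (Lk A k) * eval x (pderiv k (Pol A ν))
      + eval x (Lk A k) * eval x (Lk A k) * eval x (Pol A ν) := by
  have h : Dhalf A k (Dhalf A k (Pol A ν)) =
      pderiv k (pderiv k (Pol A ν)) - C (A k k) * (Pol A ν)
      - 2 * Lk A k * pderiv k (Pol A ν) + Lk A k * Lk A k * Pol A ν := by
    rw [Dhalf, Dhalf, map_sub, pderiv_mul, pderiv_Lk]
    ring
  rw [h]
  simp only [eval_add, eval_sub, eval_mul, eval_C]
  norm_num

lemma eval_pderiv_Pol (A : Matrix (Fin n) (Fin n) ℂ) (hA : ∀ i j, A i j = A j i)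
    (ν : Fin n → ℕ) (k : Fin n) (x : Fin n → ℂ) :
    eval x (pderiv k (Pol A ν)) =
      -∑ l, 2 * A k l * (ν l : ℂ) * eval x (Pol A (ν - ee l)) := by
  rw [pderiv_Pol A hA ν k]
  simp only [_root_.map_neg, map_sum, eval_mul, eval_C]

lemma eval_pderiv2_Pol (A : Matrix (Fin n) (Fin n) ℂ) (hA : ∀ i j, A i j = A j i)
    (ν : Fin n → ℕ) (k : Fin n) (x : Fin n → ℂ) :
    eval x (pderiv k (pderiv k (Pol A ν))) =
      ∑ l, ∑ m, 4 * A k l * (ν l : ℂ) * A k m * (((ν - ee l) m : ℕ) : ℂ) *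
        eval x (Pol A ((ν - ee l) - ee m)) := by
  rw [pderiv2_Pol A hA ν k]
  simp only [map_sum, eval_mul, eval_C]

lemma mul_sum_mul {α : Type*} (s : Finset α) (f : α → ℂ) (a b : ℂ) :
    a * (∑ i ∈ s, f i) * b = ∑ i ∈ s, a * f i * b := by
  rw [Finset.mul_sum, Finset.sum_mul]

lemma sum3_rot (f : Fin n → Fin n → Fin n → ℂ) :
    (∑ i, ∑ j, ∑ k, f i j k) = ∑ k, ∑ j, ∑ i, f i j k := by
  calc (∑ i, ∑ j, ∑ k, f i j k) = ∑ i, ∑ k, ∑ j, f i j k :=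
        Finset.sum_congr rfl fun i _ => Finset.sum_comm
    _ = ∑ k, ∑ i, ∑ j, f i j k := Finset.sum_comm
    _ = ∑ k, ∑ j, ∑ i, f i j k := Finset.sum_congr rfl fun k _ => Finset.sum_comm

end AHGProof

open AHGPaper
/-- Laplacian of the AHG function. -/
theorem ahg_laplacian (n : ℕ) (hn : 1 ≤ n) (Θ : Matrix (Fin n) (Fin n) ℂ)
    (hsym : Θ.IsSymm) (hpd : (Θ.map Complex.re).PosDef)
    (ν : Fin n → ℕ) (r : Fin n → ℝ) :
    (∑ j, cpderiv j (cpderiv j (HG Θ ν)) (fun i => (r i : ℂ))) =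
      -(HG Θ ν (fun i => (r i : ℂ))) * Θ⁻¹.trace +
        2 * (Θ⁻¹ * Θ⁻¹ * PhiM Θ ν (fun i => (r i : ℂ))).trace +
        (Θ⁻¹.mulVec (fun i => (r i : ℂ))) ⬝ᵥ
          (fun k => HG Θ ν (fun i => (r i : ℂ)) * Θ⁻¹.mulVec (fun i => (r i : ℂ)) k -
            4 * Θ⁻¹.mulVec (phiV Θ ν (fun i => (r i : ℂ))) k) := by
  classical
  have hA : ∀ i j, Θ⁻¹ i j = Θ⁻¹ j i := by
    intro i j
    have h1 : (Θ⁻¹)ᵀ = Θ⁻¹ := by rw [Matrix.transpose_nonsing_inv, hsym]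
    calc Θ⁻¹ i j = (Θ⁻¹)ᵀ j i := (Matrix.transpose_apply _ _ _).symm
      _ = Θ⁻¹ j i := by rw [h1]
  set x : Fin n → ℂ := fun i => (r i : ℂ) with hx
  set E : ℂ := Complex.exp (MvPolynomial.eval x (AHGProof.qhalf Θ⁻¹)) with hE
  set K : ℂ := AHGProof.Kc Θ ν with hK
  have hHGx : ∀ μ : Fin n → ℕ, HG Θ μ x
      = AHGProof.Kc Θ μ * MvPolynomial.eval x (AHGProof.Pol Θ⁻¹ μ) * E := by
    intro μ
    rw [AHGProof.HG_rep Θ hA μ]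
    simp only [MvPolynomial.eval_mul, MvPolynomial.eval_C]
    rfl
  have hterm : ∀ k, cpderiv k (cpderiv k (HG Θ ν)) x
      = (∑ l, ∑ m, K * 4 * Θ⁻¹ k l * (ν l : ℂ) * Θ⁻¹ k m *
          (((ν - AHGProof.ee l) m : ℕ) : ℂ) *
          MvPolynomial.eval x (AHGProof.Pol Θ⁻¹ ((ν - AHGProof.ee l) - AHGProof.ee m)) * E)
        + (-(K * MvPolynomial.eval x (AHGProof.Pol Θ⁻¹ ν) * E * Θ⁻¹ k k))
        + (∑ l, K * 4 * (Θ⁻¹.mulVec x k) * Θ⁻¹ k l * (ν l : ℂ) *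
            MvPolynomial.eval x (AHGProof.Pol Θ⁻¹ (ν - AHGProof.ee l)) * E)
        + (Θ⁻¹.mulVec x k) * (Θ⁻¹.mulVec x k) *
            (K * MvPolynomial.eval x (AHGProof.Pol Θ⁻¹ ν) * E) := by
    intro k
    have h0 := AHGProof.cpderiv2_HG Θ hA ν k
    have h1 : cpderiv k (cpderiv k (HG Θ ν)) x
        = MvPolynomial.eval x (MvPolynomial.C K *
            AHGProof.Dhalf Θ⁻¹ k (AHGProof.Dhalf Θ⁻¹ k (AHGProof.Pol Θ⁻¹ ν))) * E := by
      rw [h0]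
    rw [h1, MvPolynomial.eval_mul, MvPolynomial.eval_C, AHGProof.eval_Dhalf2,
      AHGProof.eval_pderiv_Pol Θ⁻¹ hA, AHGProof.eval_pderiv2_Pol Θ⁻¹ hA,
      AHGProof.eval_Lk]
    have e2 : K * ((∑ l, ∑ m, 4 * Θ⁻¹ k l * (ν l : ℂ) * Θ⁻¹ k m *
          (((ν - AHGProof.ee l) m : ℕ) : ℂ) *
          MvPolynomial.eval x (AHGProof.Pol Θ⁻¹ ((ν - AHGProof.ee l) - AHGProof.ee m)))) * E
        = ∑ l, ∑ m, K * 4 * Θ⁻¹ k l * (ν l : ℂ) * Θ⁻¹ k m *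
          (((ν - AHGProof.ee l) m : ℕ) : ℂ) *
          MvPolynomial.eval x (AHGProof.Pol Θ⁻¹ ((ν - AHGProof.ee l) - AHGProof.ee m)) * E := by
      rw [AHGProof.mul_sum_mul]
      refine Finset.sum_congr rfl fun l _ => ?_
      rw [AHGProof.mul_sum_mul]
      exact Finset.sum_congr rfl fun m _ => by ring
    have e3 : K * (2 * (Θ⁻¹.mulVec x k) *
          (∑ l, 2 * Θ⁻¹ k l * (ν l : ℂ) *
            MvPolynomial.eval x (AHGProof.Pol Θ⁻¹ (ν - AHGProof.ee l)))) * E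
        = ∑ l, K * 4 * (Θ⁻¹.mulVec x k) * Θ⁻¹ k l * (ν l : ℂ) *
            MvPolynomial.eval x (AHGProof.Pol Θ⁻¹ (ν - AHGProof.ee l)) * E := by
      rw [show K * (2 * (Θ⁻¹.mulVec x k) *
          (∑ l, 2 * Θ⁻¹ k l * (ν l : ℂ) *
            MvPolynomial.eval x (AHGProof.Pol Θ⁻¹ (ν - AHGProof.ee l)))) * E
        = (K * 2 * (Θ⁻¹.mulVec x k)) *
          (∑ l, 2 * Θ⁻¹ k l * (ν l : ℂ) *
            MvPolynomial.eval x (AHGProof.Pol Θ⁻¹ (ν - AHGProof.ee l))) * E from by ring]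
      rw [AHGProof.mul_sum_mul]
      exact Finset.sum_congr rfl fun l _ => by ring
    rw [← e2, ← e3]
    ring
  rw [Finset.sum_congr rfl fun k _ => hterm k]
  simp only [Finset.sum_add_distrib]
  have htrace : Θ⁻¹.trace = ∑ k, Θ⁻¹ k k := by
    simp [Matrix.trace, Matrix.diag]
  have hG1 : -HG Θ ν x * Θ⁻¹.trace
      = ∑ k, -(K * MvPolynomial.eval x (AHGProof.Pol Θ⁻¹ ν) * E * Θ⁻¹ k k) := by
    rw [hHGx ν, htrace, ← hK, neg_mul, Finset.mul_sum, ← Finset.sum_neg_distrib]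
  have hφv : ∀ l, phiV Θ ν x l
      = (1/(Real.sqrt 2 : ℂ)) * (Real.sqrt (ν l) : ℂ) *
        (AHGProof.Kc Θ (ν - AHGProof.ee l) *
          MvPolynomial.eval x (AHGProof.Pol Θ⁻¹ (ν - AHGProof.ee l)) * E) := by
    intro l
    have hi : (fun j => ν j - if j = l then 1 else 0) = ν - AHGProof.ee l := rfl
    simp only [phiV, hi, hHGx]
  have hKν : ∀ l : Fin n, K * (ν l : ℂ)
      = -(1/(Real.sqrt 2:ℂ)) * (Real.sqrt (ν l):ℂ) * AHGProof.Kc Θ (ν - AHGProof.ee l) := by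
    intro l; rw [hK]; exact AHGProof.KK2 Θ ν l
  have hdot : (Θ⁻¹ *ᵥ x ⬝ᵥ fun k => HG Θ ν x * (Θ⁻¹ *ᵥ x) k - 4 * (Θ⁻¹ *ᵥ phiV Θ ν x) k)
      = (∑ k, ∑ l, K * 4 * (Θ⁻¹ *ᵥ x) k * Θ⁻¹ k l * (ν l : ℂ) *
          MvPolynomial.eval x (AHGProof.Pol Θ⁻¹ (ν - AHGProof.ee l)) * E)
        + ∑ k, (Θ⁻¹ *ᵥ x) k * (Θ⁻¹ *ᵥ x) k *
            (K * MvPolynomial.eval x (AHGProof.Pol Θ⁻¹ ν) * E) := by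
    rw [dotProduct, ← Finset.sum_add_distrib]
    refine Finset.sum_congr rfl fun k _ => ?_
    have hmv : (Θ⁻¹ *ᵥ phiV Θ ν x) k = ∑ l, Θ⁻¹ k l * phiV Θ ν x l := by
      simp [Matrix.mulVec, dotProduct]
    rw [hmv, hHGx ν, ← hK, mul_sub]
    have h4 : (Θ⁻¹ *ᵥ x) k * (4 * ∑ l, Θ⁻¹ k l * phiV Θ ν x l)
        = -∑ l, K * 4 * (Θ⁻¹ *ᵥ x) k * Θ⁻¹ k l * (ν l : ℂ) *
            MvPolynomial.eval x (AHGProof.Pol Θ⁻¹ (ν - AHGProof.ee l)) * E := by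
      rw [Finset.mul_sum, Finset.mul_sum, ← Finset.sum_neg_distrib]
      refine Finset.sum_congr rfl fun l _ => ?_
      rw [hφv l]
      have h := hKν l
      linear_combination (4 * (Θ⁻¹ *ᵥ x) k * Θ⁻¹ k l *
        MvPolynomial.eval x (AHGProof.Pol Θ⁻¹ (ν - AHGProof.ee l)) * E) * h
    rw [h4]
    ring
  have hPhi : ∀ l m : Fin n, 2 * PhiM Θ ν x l m
      = 4 * K * (ν l : ℂ) * (((ν - AHGProof.ee l) m : ℕ) : ℂ) *
        MvPolynomial.eval x (AHGProof.Pol Θ⁻¹ ((ν - AHGProof.ee l) - AHGProof.ee m)) * E := by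
    intro l m
    have hKK := AHGProof.KK3 Θ ν l m
    by_cases hlm : l = m
    · subst hlm
      have hi : (fun j => ν j - if j = l then 2 else 0)
          = (ν - AHGProof.ee l) - AHGProof.ee l := by
        funext j
        simp only [Pi.sub_apply, AHGProof.ee]
        split_ifs with h <;> omega
      simp only [PhiM, Matrix.of_apply, eq_self_iff_true, if_true, hi]
      rcases Nat.eq_zero_or_pos (ν l) with h0 | h0
      · simp [h0]
      · have hsub : ((ν - AHGProof.ee l) l : ℕ) = ν l - 1 := by
          simp [Pi.sub_apply, AHGProof.ee]
        have hc : ((ν l : ℝ)) - 1 = (((ν - AHGProof.ee l) l : ℕ) : ℝ) := by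
          rw [hsub, Nat.cast_sub h0, Nat.cast_one]
        rw [hHGx, show ((ν l : ℝ) * ((ν l : ℝ) - 1)) = (ν l : ℝ) * (((ν - AHGProof.ee l) l : ℕ) : ℝ) from by rw [hc],
          Real.sqrt_mul (Nat.cast_nonneg _), Complex.ofReal_mul, hK]
        linear_combination (-4 : ℂ) *
          MvPolynomial.eval x (AHGProof.Pol Θ⁻¹ ((ν - AHGProof.ee l) - AHGProof.ee l)) * E * hKK
    · have hi : (fun j => ν j - ((if j = l then 1 else 0) + (if j = m then 1 else 0)))
          = (ν - AHGProof.ee l) - AHGProof.ee m := by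
        funext j
        simp only [Pi.sub_apply, AHGProof.ee]
        split_ifs with h1 h2 <;> omega
      have hsub2 : ((ν - AHGProof.ee l) m : ℕ) = ν m := by
        simp [Pi.sub_apply, AHGProof.ee, Ne.symm hlm]
      simp only [PhiM, Matrix.of_apply, if_neg hlm, hi]
      rw [hHGx, show ((ν l : ℝ) * (ν m : ℝ)) = (ν l : ℝ) * (((ν - AHGProof.ee l) m : ℕ) : ℝ) from by rw [hsub2],
        Real.sqrt_mul (Nat.cast_nonneg _), Complex.ofReal_mul, hK]
      linear_combination (-4 : ℂ) *
        MvPolynomial.eval x (AHGProof.Pol Θ⁻¹ ((ν - AHGProof.ee l) - AHGProof.ee m)) * E * hKK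
  have hG2 : 2 * (Θ⁻¹ * Θ⁻¹ * PhiM Θ ν x).trace
      = ∑ k, ∑ l, ∑ m, K * 4 * Θ⁻¹ k l * (ν l : ℂ) * Θ⁻¹ k m *
          (((ν - AHGProof.ee l) m : ℕ) : ℂ) *
          MvPolynomial.eval x (AHGProof.Pol Θ⁻¹ ((ν - AHGProof.ee l) - AHGProof.ee m)) * E := by
    have ht : (Θ⁻¹ * Θ⁻¹ * PhiM Θ ν x).trace
        = ∑ i, ∑ j, ∑ k, Θ⁻¹ i k * Θ⁻¹ k j * PhiM Θ ν x j i := by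
      simp [Matrix.trace, Matrix.diag, Matrix.mul_apply, Finset.sum_mul]
    rw [ht]
    rw [show (∑ k, ∑ l, ∑ m, K * 4 * Θ⁻¹ k l * (ν l : ℂ) * Θ⁻¹ k m *
          (((ν - AHGProof.ee l) m : ℕ) : ℂ) *
          MvPolynomial.eval x (AHGProof.Pol Θ⁻¹ ((ν - AHGProof.ee l) - AHGProof.ee m)) * E)
        = ∑ m, ∑ l, ∑ k, K * 4 * Θ⁻¹ k l * (ν l : ℂ) * Θ⁻¹ k m *
          (((ν - AHGProof.ee l) m : ℕ) : ℂ) *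
          MvPolynomial.eval x (AHGProof.Pol Θ⁻¹ ((ν - AHGProof.ee l) - AHGProof.ee m)) * E from
      AHGProof.sum3_rot _]
    rw [Finset.mul_sum]
    refine Finset.sum_congr rfl fun i _ => ?_
    rw [Finset.mul_sum]
    refine Finset.sum_congr rfl fun j _ => ?_
    rw [Finset.mul_sum]
    refine Finset.sum_congr rfl fun k _ => ?_
    have h2 := hPhi j i
    calc 2 * (Θ⁻¹ i k * Θ⁻¹ k j * PhiM Θ ν x j i)
        = Θ⁻¹ i k * Θ⁻¹ k j * (2 * PhiM Θ ν x j i) := by ring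
      _ = Θ⁻¹ i k * Θ⁻¹ k j * (4 * K * (ν j : ℂ) * (((ν - AHGProof.ee j) i : ℕ) : ℂ) *
            MvPolynomial.eval x (AHGProof.Pol Θ⁻¹ ((ν - AHGProof.ee j) - AHGProof.ee i)) * E) := by
          rw [h2]
      _ = _ := by rw [hA i k]; ring
  rw [hG1, hG2, hdot]
  ring
end
end

section
/- Offseted argument. Let n ≥ 1, let Θ ∈ ℂ^{n×n} be symmetric with positive definite real part, and let ν ∈ ℕⁿ. Then for all r, s ∈ ℂⁿ: HG_Θ^ν(r + s) = 2^{−|ν|/2} · (πⁿ·det Θ)^{1/4} · e^{(1/2)·(r−s)ᵀΘ⁻¹(r−s)} · Σ_{μ ∈ ℕⁿ, μ ⪯ ν} √(C(ν,μ)) · HG_Θ^{ν−μ}(√2·r) · HG_Θ^μ(√2·s), where μ ⪯ ν means μ_j ≤ ν_j for all j, and C(ν,μ) = Π_j binom(ν_j, μ_j) is the multi-index binomial coefficient. -/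
open scoped BigOperators
open MeasureTheory Matrix

noncomputable section

open MvPolynomial

namespace AHGAux
variable {n : ℕ}

noncomputable def qp (A : Matrix (Fin n) (Fin n) ℂ) : MvPolynomial (Fin n) ℂ :=
  ∑ i, ∑ k, MvPolynomial.C (A i k) * X i * X k

noncomputable def Top (A : Matrix (Fin n) (Fin n) ℂ) (j : Fin n)
    (p : MvPolynomial (Fin n) ℂ) : MvPolynomial (Fin n) ℂ :=
  pderiv j p - p * pderiv j (qp A)

noncomputable def Pf (A : Matrix (Fin n) (Fin n) ℂ) (ν : Fin n → ℕ) : MvPolynomial (Fin n) ℂ :=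
  (List.finRange n).foldr (fun j p => (Top A j)^[ν j] p) 1

lemma eval_qp (A : Matrix (Fin n) (Fin n) ℂ) (z : Fin n → ℂ) :
    eval z (qp A) = ∑ i, ∑ k, A i k * z i * z k := by
  simp [qp]

lemma dqp (A : Matrix (Fin n) (Fin n) ℂ) (j : Fin n) :
    pderiv j (qp A) = ∑ k, MvPolynomial.C (A j k + A k j) * X k := by
  rw [qp]
  simp only [map_sum, pderiv_mul, pderiv_C, pderiv_X, zero_mul, zero_add, Pi.single_apply, mul_ite,
    mul_one, mul_zero, ite_mul, one_mul]
  simp only [Finset.sum_add_distrib, Finset.sum_ite_eq, Finset.sum_ite_eq', Finset.mem_univ,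
    if_true, map_add, add_mul]
  congr 1
  rw [Finset.sum_congr rfl (fun x _ => show (∑ x1, if x = j then MvPolynomial.C (A x x1) * X x1 else 0 : MvPolynomial (Fin n) ℂ) = if x = j then ∑ x1, MvPolynomial.C (A x x1) * X x1 else 0 from by split_ifs <;> simp),
    Finset.sum_ite_eq' Finset.univ j]
  simp

lemma pderiv_pderiv_comm (i j : Fin n) (p : MvPolynomial (Fin n) ℂ) :
    pderiv i (pderiv j p) = pderiv j (pderiv i p) := by
  induction p using MvPolynomial.induction_on with
  | C a => simp
  | add p q hp hq => simp [hp, hq]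
  | mul_X p k hp =>
    simp only [pderiv_mul, pderiv_X, map_add, hp, Pi.single_apply]
    split_ifs <;> simp <;> ring

lemma ddqp (A : Matrix (Fin n) (Fin n) ℂ) (i j : Fin n) :
    pderiv i (pderiv j (qp A)) = MvPolynomial.C (A j i + A i j) := by
  rw [dqp, map_sum]
  simp only [pderiv_mul, pderiv_C, pderiv_X, zero_mul, zero_add, Pi.single_apply, mul_ite,
    mul_one, mul_zero]
  simp [Finset.sum_ite_eq', Finset.mem_univ]

lemma Top_comm (A : Matrix (Fin n) (Fin n) ℂ) (i j : Fin n) (p : MvPolynomial (Fin n) ℂ) :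
    Top A i (Top A j p) = Top A j (Top A i p) := by
  simp only [Top, map_sub, pderiv_mul, pderiv_pderiv_comm i j p, ddqp]
  ring_nf

lemma iter_comm {α : Type*} {f g : α → α} (h : ∀ x, f (g x) = g (f x)) (k : ℕ) (x : α) :
    f^[k] (g x) = g (f^[k] x) := by
  induction k generalizing x with
  | zero => rfl
  | succ k ih => rw [Function.iterate_succ_apply, h, ih, ← Function.iterate_succ_apply]

lemma foldr_congr (A : Matrix (Fin n) (Fin n) ℂ) (l : List (Fin n)) (ν ν' : Fin n → ℕ)
    (h : ∀ j ∈ l, ν j = ν' j) (p : MvPolynomial (Fin n) ℂ) :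
    l.foldr (fun j r => (Top A j)^[ν j] r) p = l.foldr (fun j r => (Top A j)^[ν' j] r) p := by
  induction l with
  | nil => rfl
  | cons i t ih =>
    simp only [List.foldr_cons]
    rw [h i (by simp), ih (fun j hj => h j (by simp [hj]))]

lemma foldr_rec (A : Matrix (Fin n) (Fin n) ℂ) (j : Fin n) (l : List (Fin n)) (hl : l.Nodup)
    (hj : j ∈ l) (ν : Fin n → ℕ) (p : MvPolynomial (Fin n) ℂ) :
    l.foldr (fun i r => (Top A i)^[ν i + if i = j then 1 else 0] r) p
      = Top A j (l.foldr (fun i r => (Top A i)^[ν i] r) p) := by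
  induction l with
  | nil => exact absurd hj List.not_mem_nil
  | cons i t ih =>
    simp only [List.foldr_cons]
    rcases List.nodup_cons.1 hl with ⟨hit, ht⟩
    by_cases hij : i = j
    · subst hij
      have heq : t.foldr (fun m r => (Top A m)^[ν m + if m = i then 1 else 0] r) p
          = t.foldr (fun m r => (Top A m)^[ν m] r) p := by
        apply foldr_congr
        intro m hm
        have hmi : m ≠ i := fun h => hit (h ▸ hm)
        simp [hmi]
      rw [heq, if_pos rfl, Function.iterate_succ_apply']
    · have hjt : j ∈ t := by
        rcases List.mem_cons.1 hj with h | h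
        · exact absurd h.symm hij
        · exact h
      rw [if_neg hij, ih ht hjt]
      exact iter_comm (fun x => Top_comm A i j x) (ν i) _

lemma Pf_rec (A : Matrix (Fin n) (Fin n) ℂ) (ν : Fin n → ℕ) (j : Fin n) :
    Pf A (fun m => ν m + if m = j then 1 else 0) = Top A j (Pf A ν) :=
  foldr_rec A j (List.finRange n) (List.nodup_finRange n) (List.mem_finRange j) ν 1

lemma Pf_zero (A : Matrix (Fin n) (Fin n) ℂ) : Pf A (fun _ => 0) = 1 := by
  rw [Pf]
  induction List.finRange n with
  | nil => rfl
  | cons i t ih => simpa using ih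

lemma hasDerivAt_eval_update (p : MvPolynomial (Fin n) ℂ) (z : Fin n → ℂ) (j : Fin n) (s : ℂ) :
    HasDerivAt (fun t => eval (Function.update z j t) p)
      (eval (Function.update z j s) (pderiv j p)) s := by
  induction p using MvPolynomial.induction_on with
  | C a => simpa using hasDerivAt_const s a
  | add p q hp hq => simpa using hp.fun_add hq
  | mul_X p k hp =>
    rcases eq_or_ne k j with rfl | hk
    · have h := hp.fun_mul (hasDerivAt_id s)
      simp only [_root_.map_mul, eval_X, pderiv_mul, pderiv_X, Pi.single_apply, if_pos rfl,
        map_add, eval_C, Function.update_self, id_eq] at h ⊢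
      refine h.congr_deriv ?_
      simp
    · have h := hp.mul_const (z k)
      simp only [_root_.map_mul, eval_X, pderiv_mul, pderiv_X, Pi.single_apply, if_neg
        (show ¬ k = j from hk), map_add, Function.update_of_ne hk] at h ⊢
      refine h.congr_deriv ?_
      simp [Function.update_apply, hk]

lemma cpderiv_eval_exp (A : Matrix (Fin n) (Fin n) ℂ) (j : Fin n) (p : MvPolynomial (Fin n) ℂ) :
    AHGPaper.cpderiv j (fun x => eval x p * Complex.exp (-(eval x (qp A)))) =
      fun x => eval x (Top A j p) * Complex.exp (-(eval x (qp A))) := by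
  funext x
  have hp := hasDerivAt_eval_update p x j (x j)
  have hq := hasDerivAt_eval_update (qp A) x j (x j)
  have h := hp.mul hq.neg.cexp
  simp only [Function.update_eq_self, Pi.neg_apply, Pi.mul_def] at h
  rw [AHGPaper.cpderiv, h.deriv, Top, map_sub, _root_.map_mul]
  ring

lemma iter_cpderiv_eval_exp (A : Matrix (Fin n) (Fin n) ℂ) (j : Fin n) (k : ℕ)
    (p : MvPolynomial (Fin n) ℂ) :
    (AHGPaper.cpderiv j)^[k] (fun x => eval x p * Complex.exp (-(eval x (qp A)))) =
      fun x => eval x ((Top A j)^[k] p) * Complex.exp (-(eval x (qp A))) := by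
  induction k generalizing p with
  | zero => rfl
  | succ k ih =>
    rw [Function.iterate_succ_apply, cpderiv_eval_exp, ih, ← Function.iterate_succ_apply]

lemma mpderiv_eq (A : Matrix (Fin n) (Fin n) ℂ) (ν : Fin n → ℕ) :
    AHGPaper.mpderiv ν (fun x => Complex.exp (-(eval x (qp A)))) =
      fun x => eval x (Pf A ν) * Complex.exp (-(eval x (qp A))) := by
  have main : ∀ l : List (Fin n), ∀ p : MvPolynomial (Fin n) ℂ,
      l.foldr (fun j g => (AHGPaper.cpderiv j)^[ν j] g)
          (fun x => eval x p * Complex.exp (-(eval x (qp A)))) =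
        fun x => eval x (l.foldr (fun j r => (Top A j)^[ν j] r) p) *
          Complex.exp (-(eval x (qp A))) := by
    intro l
    induction l with
    | nil => intro p; rfl
    | cons i t ih =>
      intro p
      simp only [List.foldr_cons, ih, iter_cpderiv_eval_exp]
  have h1 : (fun x : Fin n → ℂ => Complex.exp (-(eval x (qp A)))) =
      fun x => eval x (1 : MvPolynomial (Fin n) ℂ) * Complex.exp (-(eval x (qp A))) := by
    funext x; simp
  rw [AHGPaper.mpderiv, h1, main, Pf]

lemma hasDerivAt_eval_addpt (p : MvPolynomial (Fin n) ℂ) (x y : Fin n → ℂ) (j : Fin n) :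
    HasDerivAt (fun t => eval (Function.update x j t + y) p)
      (eval (x + y) (pderiv j p)) (x j) := by
  have key : ∀ t : ℂ, Function.update x j t + y = Function.update (x + y) j (t + y j) := by
    intro t; funext l
    rcases eq_or_ne l j with rfl | h
    · simp
    · simp [Function.update_of_ne h]
  have h0 := hasDerivAt_eval_update p (x + y) j (x j + y j)
  have h1 : HasDerivAt (fun t : ℂ => t + y j) 1 (x j) := (hasDerivAt_id _).add_const _
  have h2 := HasDerivAt.comp (x j) h0 h1
  have heq : (fun t => eval (Function.update x j t + y) p) =
      (fun t => eval (Function.update (x + y) j t) p) ∘ (fun t : ℂ => t + y j) := by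
    funext t; simp [Function.comp, key t]
  rw [heq]
  have : Function.update (x + y) j (x j + y j) = x + y := by
    have : (x + y) j = x j + y j := rfl
    rw [← this, Function.update_eq_self]
  rw [this] at h2
  simpa using h2

lemma hasDerivAt_eval_addpt' (p : MvPolynomial (Fin n) ℂ) (x y : Fin n → ℂ) (j : Fin n) :
    HasDerivAt (fun t => eval (x + Function.update y j t) p)
      (eval (x + y) (pderiv j p)) (y j) := by
  have key : ∀ t : ℂ, x + Function.update y j t = Function.update (x + y) j (x j + t) := by
    intro t; funext l
    rcases eq_or_ne l j with rfl | h
    · simp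
    · simp [Function.update_of_ne h]
  have h0 := hasDerivAt_eval_update p (x + y) j (x j + y j)
  have h1 : HasDerivAt (fun t : ℂ => x j + t) 1 (y j) := (hasDerivAt_id _).const_add _
  have h2 := HasDerivAt.comp (y j) h0 h1
  have heq : (fun t => eval (x + Function.update y j t) p) =
      (fun t => eval (Function.update (x + y) j t) p) ∘ (fun t : ℂ => x j + t) := by
    funext t; simp [Function.comp, key t]
  rw [heq]
  have : Function.update (x + y) j (x j + y j) = x + y := by
    have : (x + y) j = x j + y j := rfl
    rw [← this, Function.update_eq_self]
  rw [this] at h2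
  simpa using h2

lemma hasDerivAt_eval_smulpt (p : MvPolynomial (Fin n) ℂ) (c : ℂ) (x : Fin n → ℂ) (j : Fin n) :
    HasDerivAt (fun t => eval (fun i => c * Function.update x j t i) p)
      (c * eval (fun i => c * x i) (pderiv j p)) (x j) := by
  have key : ∀ t : ℂ, (fun i => c * Function.update x j t i) =
      Function.update (fun i => c * x i) j (c * t) := by
    intro t; funext l
    rcases eq_or_ne l j with rfl | h
    · simp
    · simp [Function.update_of_ne h]
  have h0 := hasDerivAt_eval_update p (fun i => c * x i) j (c * x j)
  have h1 : HasDerivAt (fun t : ℂ => c * t) c (x j) := by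
    simpa using (hasDerivAt_id (x j)).const_mul c
  have h2 := HasDerivAt.comp (x j) h0 h1
  have heq : (fun t => eval (fun i => c * Function.update x j t i) p) =
      (fun t => eval (Function.update (fun i => c * x i) j t) p) ∘ (fun t : ℂ => c * t) := by
    funext t; simp [Function.comp, key t]
  rw [heq]
  have h3 : Function.update (fun i => c * x i) j (c * x j) = fun i => c * x i :=
    Function.update_eq_self j _
  rw [h3] at h2
  rw [mul_comm] at h2
  exact h2

lemma choose_prod_split (ν μ : Fin n → ℕ) (j : Fin n) (hμ : μ ∈ Finset.Iic (fun m => ν m + if m = j then 1 else 0)) :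
    (∏ l, (ν l + if l = j then 1 else 0).choose (μ l)) =
      (∏ l, (ν l).choose (μ l)) +
        (if 1 ≤ μ j then ∏ l, (ν l).choose (μ l - if l = j then 1 else 0) else 0) := by
  have h1 : ∀ (f : Fin n → ℕ), (∏ l, f l) = f j * ∏ l ∈ Finset.univ.erase j, f l := by
    intro f
    rw [Finset.mul_prod_erase Finset.univ f (Finset.mem_univ j)]
  rw [h1, h1 (fun l => (ν l).choose (μ l)), h1 (fun l => (ν l).choose (μ l - if l = j then 1 else 0))]
  have he : ∀ g : Fin n → ℕ, ∏ l ∈ Finset.univ.erase j, (ν l + if l = j then 1 else 0).choose (g l)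
      = ∏ l ∈ Finset.univ.erase j, (ν l).choose (g l) := by
    intro g
    refine Finset.prod_congr rfl fun l hl => ?_
    have : l ≠ j := (Finset.mem_erase.1 hl).1
    simp [this]
  have he2 : ∏ l ∈ Finset.univ.erase j, (ν l).choose (μ l - if l = j then 1 else 0)
      = ∏ l ∈ Finset.univ.erase j, (ν l).choose (μ l) := by
    refine Finset.prod_congr rfl fun l hl => ?_
    have : l ≠ j := (Finset.mem_erase.1 hl).1
    simp [this]
  rw [he, he2]
  rcases Nat.eq_zero_or_pos (μ j) with h0 | hpos
  · simp [h0]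
  · obtain ⟨m, hm⟩ := Nat.exists_eq_succ_of_ne_zero (Nat.pos_iff_ne_zero.1 hpos)
    have hpos' : 1 ≤ μ j := hpos
    rw [if_pos hpos', hm]
    simp only [if_pos rfl, eq_self_iff_true, if_true, Nat.succ_sub_one, Nat.choose_succ_succ]
    ring

lemma pascal_conv (ν : Fin n → ℕ) (j : Fin n) (a b : (Fin n → ℕ) → ℂ) :
    ∑ μ ∈ Finset.Iic (fun m => ν m + if m = j then 1 else 0),
        (((∏ l, (ν l + if l = j then 1 else 0).choose (μ l)) : ℕ) : ℂ) *
          a (fun m => (ν m + if m = j then 1 else 0) - μ m) * b μ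
      = ∑ μ ∈ Finset.Iic ν, (((∏ l, (ν l).choose (μ l)) : ℕ) : ℂ) *
          (a (fun m => (ν m - μ m) + if m = j then 1 else 0) * b μ
            + a (fun m => ν m - μ m) * b (fun m => μ m + if m = j then 1 else 0)) := by
  classical
  have hsplit : ∀ μ ∈ Finset.Iic (fun m => ν m + if m = j then 1 else 0),
      (((∏ l, (ν l + if l = j then 1 else 0).choose (μ l)) : ℕ) : ℂ) *
          a (fun m => (ν m + if m = j then 1 else 0) - μ m) * b μ
        = (((∏ l, (ν l).choose (μ l)) : ℕ) : ℂ) *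
            a (fun m => (ν m + if m = j then 1 else 0) - μ m) * b μ
          + (if 1 ≤ μ j then (((∏ l, (ν l).choose (μ l - if l = j then 1 else 0)) : ℕ) : ℂ) *
              a (fun m => (ν m + if m = j then 1 else 0) - μ m) * b μ else 0) := by
    intro μ hμ
    rw [choose_prod_split ν μ j hμ]
    push_cast
    try dsimp only
    split_ifs <;> push_cast <;> ring
  rw [Finset.sum_congr rfl hsplit, Finset.sum_add_distrib]
  have hsub : Finset.Iic ν ⊆ Finset.Iic (fun m => ν m + if m = j then 1 else 0) := by
    intro μ hμ
    rw [Finset.mem_Iic] at hμ ⊢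
    intro m
    exact le_trans (hμ m) (by simp)
  have hpart1 : ∑ μ ∈ Finset.Iic (fun m => ν m + if m = j then 1 else 0),
      (((∏ l, (ν l).choose (μ l)) : ℕ) : ℂ) *
        a (fun m => (ν m + if m = j then 1 else 0) - μ m) * b μ
      = ∑ μ ∈ Finset.Iic ν, (((∏ l, (ν l).choose (μ l)) : ℕ) : ℂ) *
          a (fun m => (ν m - μ m) + if m = j then 1 else 0) * b μ := by
    rw [← Finset.sum_subset hsub]
    · refine Finset.sum_congr rfl fun μ hμ => ?_
      rw [Finset.mem_Iic] at hμ
      have : (fun m => (ν m + if m = j then 1 else 0) - μ m)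
          = fun m => (ν m - μ m) + if m = j then 1 else 0 := by
        funext m
        have h : μ m ≤ ν m := hμ m
        try dsimp only
        split_ifs <;> omega
      rw [this]
    · intro μ hμ hnot
      rw [Finset.mem_Iic] at hnot
      rw [Pi.le_def] at hnot
      push_neg at hnot
      obtain ⟨l, hl⟩ := hnot
      have : (ν l).choose (μ l) = 0 := Nat.choose_eq_zero_of_lt hl
      rw [Finset.prod_eq_zero (Finset.mem_univ l) this]
      simp
  have hpart2 : ∑ μ ∈ Finset.Iic (fun m => ν m + if m = j then 1 else 0),
      (if 1 ≤ μ j then (((∏ l, (ν l).choose (μ l - if l = j then 1 else 0)) : ℕ) : ℂ) *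
          a (fun m => (ν m + if m = j then 1 else 0) - μ m) * b μ else 0)
      = ∑ μ ∈ Finset.Iic ν, (((∏ l, (ν l).choose (μ l)) : ℕ) : ℂ) *
          a (fun m => ν m - μ m) * b (fun m => μ m + if m = j then 1 else 0) := by
    rw [← Finset.sum_filter]
    symm
    refine Finset.sum_nbij' (fun μ => fun m => μ m + if m = j then 1 else 0)
      (fun μ => fun m => μ m - if m = j then 1 else 0) ?_ ?_ ?_ ?_ ?_
    · intro μ hμ
      rw [Finset.mem_Iic] at hμ
      simp only [Finset.mem_filter, Finset.mem_Iic]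
      constructor
      · intro m
        have h : μ m ≤ ν m := hμ m
        try dsimp only
        split_ifs <;> omega
      · simp
    · intro μ hμ
      simp only [Finset.mem_filter, Finset.mem_Iic] at hμ
      rw [Finset.mem_Iic]
      intro m
      have h1 : μ m ≤ ν m + if m = j then 1 else 0 := hμ.1 m
      try dsimp only
      split_ifs at h1 ⊢ <;> omega
    · intro μ hμ
      funext m
      try dsimp only
      split_ifs <;> omega
    · intro μ hμ
      simp only [Finset.mem_filter, Finset.mem_Iic] at hμ
      have h2 : 1 ≤ μ j := hμ.2
      funext m
      rcases eq_or_ne m j with rfl | hm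
      · try dsimp only
        split_ifs with h
        · omega
        · exact absurd rfl h
      · try dsimp only
        split_ifs <;> omega
    · intro μ hμ
      try dsimp only
      have h2 : (fun m => (ν m + if m = j then 1 else 0) - (μ m + if m = j then 1 else 0))
          = fun m => ν m - μ m := by
        funext m
        try dsimp only
        split_ifs <;> omega
      have h4 : (∏ l, (ν l).choose ((μ l + if l = j then 1 else 0) - if l = j then 1 else 0))
          = ∏ l, (ν l).choose (μ l) :=
        Finset.prod_congr rfl (fun l _ => by split_ifs <;> simp)
      rw [h2, h4]
  rw [hpart1, hpart2, ← Finset.sum_add_distrib]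
  refine Finset.sum_congr rfl fun μ _ => ?_
  ring

lemma key (A : Matrix (Fin n) (Fin n) ℂ) (N : ℕ) :
    ∀ ν : Fin n → ℕ, (∑ j, ν j) = N → ∀ x y : Fin n → ℂ,
      (Real.sqrt 2 : ℂ) ^ N * eval (x + y) (Pf A ν) =
        ∑ μ ∈ Finset.Iic ν, (((∏ l, (ν l).choose (μ l)) : ℕ) : ℂ) *
          eval (fun i => (Real.sqrt 2 : ℂ) * x i) (Pf A (fun m => ν m - μ m)) *
          eval (fun i => (Real.sqrt 2 : ℂ) * y i) (Pf A μ) := by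
  induction N with
  | zero =>
    intro ν hν x y
    have hν0 : ν = fun _ => 0 := by
      funext j
      have := Finset.single_le_sum (f := ν) (fun i _ => Nat.zero_le _) (Finset.mem_univ j)
      omega
    subst hν0
    have hIic : Finset.Iic (fun _ => 0 : Fin n → ℕ) = {fun _ => 0} := by
      ext μ
      simp only [Finset.mem_Iic, Finset.mem_singleton]
      constructor
      · intro h; funext m; exact Nat.le_zero.1 (h m)
      · rintro rfl; exact le_refl _
    rw [hIic, Finset.sum_singleton]
    have h0 : (fun m => (fun _ => 0 : Fin n → ℕ) m - (fun _ => 0 : Fin n → ℕ) m) = (fun _ => 0 : Fin n → ℕ) := by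
      funext m; rfl
    rw [h0, Pf_zero]
    simp
  | succ N ih =>
    intro ν hν x y
    obtain ⟨j, hj⟩ : ∃ j, ν j ≠ 0 := by
      by_contra hc
      push_neg at hc
      rw [Finset.sum_congr rfl (fun m _ => hc m)] at hν
      simp at hν
    set ν' : Fin n → ℕ := fun m => ν m - if m = j then 1 else 0 with hν'def
    have hνeq : ν = fun m => ν' m + if m = j then 1 else 0 := by
      funext m
      simp only [hν'def]
      rcases eq_or_ne m j with rfl | hm
      · split_ifs with h
        · omega
        · exact absurd rfl h
      · split_ifs with h
        · exact absurd h hm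
        · omega
    have hsum' : (∑ m, ν' m) = N := by
      have h1 : (∑ m, ν m) = (∑ m, ν' m) + ∑ m, (if m = j then 1 else 0) := by
        rw [← Finset.sum_add_distrib]
        exact Finset.sum_congr rfl fun m _ => congrFun hνeq m
      have h2 : (∑ m : Fin n, (if m = j then 1 else 0)) = 1 := by
        rw [Finset.sum_ite_eq' Finset.univ j fun _ => 1]
        simp
      omega
    -- x-direction derivative of IH
    have hder1 : (Real.sqrt 2 : ℂ) ^ N * eval (x + y) (pderiv j (Pf A ν')) =
        ∑ μ ∈ Finset.Iic ν', (((∏ l, (ν' l).choose (μ l)) : ℕ) : ℂ) *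
          ((Real.sqrt 2 : ℂ) * eval (fun i => (Real.sqrt 2 : ℂ) * x i)
            (pderiv j (Pf A (fun m => ν' m - μ m)))) *
          eval (fun i => (Real.sqrt 2 : ℂ) * y i) (Pf A μ) := by
      have hL : HasDerivAt
          (fun t => (Real.sqrt 2 : ℂ) ^ N * eval (Function.update x j t + y) (Pf A ν'))
          ((Real.sqrt 2 : ℂ) ^ N * eval (x + y) (pderiv j (Pf A ν'))) (x j) :=
        (hasDerivAt_eval_addpt (Pf A ν') x y j).const_mul _
      have hR : HasDerivAt
          (fun t => ∑ μ ∈ Finset.Iic ν', (((∏ l, (ν' l).choose (μ l)) : ℕ) : ℂ) *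
            eval (fun i => (Real.sqrt 2 : ℂ) * Function.update x j t i) (Pf A (fun m => ν' m - μ m)) *
            eval (fun i => (Real.sqrt 2 : ℂ) * y i) (Pf A μ))
          (∑ μ ∈ Finset.Iic ν', (((∏ l, (ν' l).choose (μ l)) : ℕ) : ℂ) *
            ((Real.sqrt 2 : ℂ) * eval (fun i => (Real.sqrt 2 : ℂ) * x i)
              (pderiv j (Pf A (fun m => ν' m - μ m)))) *
            eval (fun i => (Real.sqrt 2 : ℂ) * y i) (Pf A μ)) (x j) := by
        apply HasDerivAt.fun_sum
        intro μ hμ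
        exact ((hasDerivAt_eval_smulpt (Pf A (fun m => ν' m - μ m)) _ x j).const_mul _).mul_const _
      have heq : (fun t => (Real.sqrt 2 : ℂ) ^ N * eval (Function.update x j t + y) (Pf A ν')) =
          (fun t => ∑ μ ∈ Finset.Iic ν', (((∏ l, (ν' l).choose (μ l)) : ℕ) : ℂ) *
            eval (fun i => (Real.sqrt 2 : ℂ) * Function.update x j t i) (Pf A (fun m => ν' m - μ m)) *
            eval (fun i => (Real.sqrt 2 : ℂ) * y i) (Pf A μ)) :=
        funext fun t => ih ν' hsum' (Function.update x j t) y
      rw [heq] at hL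
      exact hL.unique hR
    -- y-direction derivative of IH
    have hder2 : (Real.sqrt 2 : ℂ) ^ N * eval (x + y) (pderiv j (Pf A ν')) =
        ∑ μ ∈ Finset.Iic ν', (((∏ l, (ν' l).choose (μ l)) : ℕ) : ℂ) *
          eval (fun i => (Real.sqrt 2 : ℂ) * x i) (Pf A (fun m => ν' m - μ m)) *
          ((Real.sqrt 2 : ℂ) * eval (fun i => (Real.sqrt 2 : ℂ) * y i) (pderiv j (Pf A μ))) := by
      have hL : HasDerivAt
          (fun t => (Real.sqrt 2 : ℂ) ^ N * eval (x + Function.update y j t) (Pf A ν'))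
          ((Real.sqrt 2 : ℂ) ^ N * eval (x + y) (pderiv j (Pf A ν'))) (y j) :=
        (hasDerivAt_eval_addpt' (Pf A ν') x y j).const_mul _
      have hR : HasDerivAt
          (fun t => ∑ μ ∈ Finset.Iic ν', (((∏ l, (ν' l).choose (μ l)) : ℕ) : ℂ) *
            eval (fun i => (Real.sqrt 2 : ℂ) * x i) (Pf A (fun m => ν' m - μ m)) *
            eval (fun i => (Real.sqrt 2 : ℂ) * Function.update y j t i) (Pf A μ))
          (∑ μ ∈ Finset.Iic ν', (((∏ l, (ν' l).choose (μ l)) : ℕ) : ℂ) *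
            eval (fun i => (Real.sqrt 2 : ℂ) * x i) (Pf A (fun m => ν' m - μ m)) *
            ((Real.sqrt 2 : ℂ) * eval (fun i => (Real.sqrt 2 : ℂ) * y i) (pderiv j (Pf A μ)))) (y j) := by
        apply HasDerivAt.fun_sum
        intro μ hμ
        exact (hasDerivAt_eval_smulpt (Pf A μ) _ y j).const_mul _
      have heq : (fun t => (Real.sqrt 2 : ℂ) ^ N * eval (x + Function.update y j t) (Pf A ν')) =
          (fun t => ∑ μ ∈ Finset.Iic ν', (((∏ l, (ν' l).choose (μ l)) : ℕ) : ℂ) *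
            eval (fun i => (Real.sqrt 2 : ℂ) * x i) (Pf A (fun m => ν' m - μ m)) *
            eval (fun i => (Real.sqrt 2 : ℂ) * Function.update y j t i) (Pf A μ)) :=
        funext fun t => ih ν' hsum' x (Function.update y j t)
      rw [heq] at hL
      exact hL.unique hR
    have hIH0 := ih ν' hsum' x y
    have hlin : (Real.sqrt 2 : ℂ) * eval (x + y) (pderiv j (qp A)) =
        eval (fun i => (Real.sqrt 2 : ℂ) * x i) (pderiv j (qp A)) +
          eval (fun i => (Real.sqrt 2 : ℂ) * y i) (pderiv j (qp A)) := by
      simp only [dqp, map_sum, _root_.map_mul, eval_C, eval_X, Pi.add_apply]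
      rw [Finset.mul_sum, ← Finset.sum_add_distrib]
      exact Finset.sum_congr rfl fun k _ => by ring
    have hu2 : (Real.sqrt 2 : ℂ) * (Real.sqrt 2 : ℂ) = 2 := by
      rw [← Complex.ofReal_mul, Real.mul_self_sqrt (by norm_num : (0:ℝ) ≤ 2)]
      norm_num
    -- rewrite the goal
    rw [hνeq, Pf_rec A ν' j]
    rw [pascal_conv ν' j (fun κ => eval (fun i => (Real.sqrt 2 : ℂ) * x i) (Pf A κ))
      (fun κ => eval (fun i => (Real.sqrt 2 : ℂ) * y i) (Pf A κ))]
    have hterm : ∀ μ ∈ Finset.Iic ν',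
        (((∏ l, (ν' l).choose (μ l)) : ℕ) : ℂ) *
          ((fun κ => eval (fun i => (Real.sqrt 2 : ℂ) * x i) (Pf A κ)) (fun m => (ν' m - μ m) + if m = j then 1 else 0) *
              (fun κ => eval (fun i => (Real.sqrt 2 : ℂ) * y i) (Pf A κ)) μ
            + (fun κ => eval (fun i => (Real.sqrt 2 : ℂ) * x i) (Pf A κ)) (fun m => ν' m - μ m) *
              (fun κ => eval (fun i => (Real.sqrt 2 : ℂ) * y i) (Pf A κ)) (fun m => μ m + if m = j then 1 else 0))
        = (((∏ l, (ν' l).choose (μ l)) : ℕ) : ℂ) *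
              eval (fun i => (Real.sqrt 2 : ℂ) * x i) (pderiv j (Pf A (fun m => ν' m - μ m))) *
              eval (fun i => (Real.sqrt 2 : ℂ) * y i) (Pf A μ)
          + (((∏ l, (ν' l).choose (μ l)) : ℕ) : ℂ) *
              eval (fun i => (Real.sqrt 2 : ℂ) * x i) (Pf A (fun m => ν' m - μ m)) *
              eval (fun i => (Real.sqrt 2 : ℂ) * y i) (pderiv j (Pf A μ))
          - eval (fun i => (Real.sqrt 2 : ℂ) * x i) (pderiv j (qp A)) *
              ((((∏ l, (ν' l).choose (μ l)) : ℕ) : ℂ) *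
                eval (fun i => (Real.sqrt 2 : ℂ) * x i) (Pf A (fun m => ν' m - μ m)) *
                eval (fun i => (Real.sqrt 2 : ℂ) * y i) (Pf A μ))
          - eval (fun i => (Real.sqrt 2 : ℂ) * y i) (pderiv j (qp A)) *
              ((((∏ l, (ν' l).choose (μ l)) : ℕ) : ℂ) *
                eval (fun i => (Real.sqrt 2 : ℂ) * x i) (Pf A (fun m => ν' m - μ m)) *
                eval (fun i => (Real.sqrt 2 : ℂ) * y i) (Pf A μ)) := by
      intro μ hμ
      have hr1 : Pf A (fun m => (ν' m - μ m) + if m = j then 1 else 0)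
          = Top A j (Pf A (fun m => ν' m - μ m)) := Pf_rec A (fun m => ν' m - μ m) j
      have hr2 : Pf A (fun m => μ m + if m = j then 1 else 0) = Top A j (Pf A μ) := Pf_rec A μ j
      dsimp only
      rw [hr1, hr2]
      simp only [Top, map_sub, _root_.map_mul]
      ring
    rw [Finset.sum_congr rfl hterm]
    simp only [Finset.sum_add_distrib, Finset.sum_sub_distrib, ← Finset.mul_sum]
    simp only [Top, map_sub, _root_.map_mul]
    have hp1 : (∑ μ ∈ Finset.Iic ν', (((∏ l, (ν' l).choose (μ l)) : ℕ) : ℂ) *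
          ((Real.sqrt 2 : ℂ) * eval (fun i => (Real.sqrt 2 : ℂ) * x i)
            (pderiv j (Pf A (fun m => ν' m - μ m)))) *
          eval (fun i => (Real.sqrt 2 : ℂ) * y i) (Pf A μ))
        = (Real.sqrt 2 : ℂ) * ∑ μ ∈ Finset.Iic ν', (((∏ l, (ν' l).choose (μ l)) : ℕ) : ℂ) *
            eval (fun i => (Real.sqrt 2 : ℂ) * x i) (pderiv j (Pf A (fun m => ν' m - μ m))) *
            eval (fun i => (Real.sqrt 2 : ℂ) * y i) (Pf A μ) := by
      rw [Finset.mul_sum]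
      exact Finset.sum_congr rfl fun μ _ => by ring
    have hp2 : (∑ μ ∈ Finset.Iic ν', (((∏ l, (ν' l).choose (μ l)) : ℕ) : ℂ) *
          eval (fun i => (Real.sqrt 2 : ℂ) * x i) (Pf A (fun m => ν' m - μ m)) *
          ((Real.sqrt 2 : ℂ) * eval (fun i => (Real.sqrt 2 : ℂ) * y i) (pderiv j (Pf A μ))))
        = (Real.sqrt 2 : ℂ) * ∑ μ ∈ Finset.Iic ν', (((∏ l, (ν' l).choose (μ l)) : ℕ) : ℂ) *
            eval (fun i => (Real.sqrt 2 : ℂ) * x i) (Pf A (fun m => ν' m - μ m)) *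
            eval (fun i => (Real.sqrt 2 : ℂ) * y i) (pderiv j (Pf A μ)) := by
      rw [Finset.mul_sum]
      exact Finset.sum_congr rfl fun μ _ => by ring
    have h1 := hder1.trans hp1
    have h2 := hder2.trans hp2
    linear_combination ((Real.sqrt 2 : ℂ) / 2) * h1 + ((Real.sqrt 2 : ℂ) / 2) * h2
      + (((∑ μ ∈ Finset.Iic ν', (((∏ l, (ν' l).choose (μ l)) : ℕ) : ℂ) *
            eval (fun i => (Real.sqrt 2 : ℂ) * x i) (pderiv j (Pf A (fun m => ν' m - μ m))) *
            eval (fun i => (Real.sqrt 2 : ℂ) * y i) (Pf A μ))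
          + ∑ μ ∈ Finset.Iic ν', (((∏ l, (ν' l).choose (μ l)) : ℕ) : ℂ) *
            eval (fun i => (Real.sqrt 2 : ℂ) * x i) (Pf A (fun m => ν' m - μ m)) *
            eval (fun i => (Real.sqrt 2 : ℂ) * y i) (pderiv j (Pf A μ))) / 2) * hu2
      - ((Real.sqrt 2 : ℂ) * eval (x + y) (pderiv j (qp A))) * hIH0
      - (∑ μ ∈ Finset.Iic ν', (((∏ l, (ν' l).choose (μ l)) : ℕ) : ℂ) *
            eval (fun i => (Real.sqrt 2 : ℂ) * x i) (Pf A (fun m => ν' m - μ m)) *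
            eval (fun i => (Real.sqrt 2 : ℂ) * y i) (Pf A μ)) * hlin

lemma det_ne_zero' (Θ : Matrix (Fin n) (Fin n) ℂ) (hsym : Θ.IsSymm)
    (hpd : (Θ.map Complex.re).PosDef) : Θ.det ≠ 0 := by
  intro h
  obtain ⟨v, hv0, hv⟩ := Matrix.exists_mulVec_eq_zero_iff.2 h
  set a : Fin n → ℝ := fun i => (v i).re with ha
  set b : Fin n → ℝ := fun i => (v i).im with hb
  have hsymY : ∀ i k, (Θ i k).im = (Θ k i).im := by
    intro i k
    have h1 : Θ k i = Θ i k := by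
      have h2 := congrFun (congrFun hsym i) k
      rwa [Matrix.transpose_apply] at h2
    rw [h1]
  have hvi : ∀ i, ∑ k, Θ i k * v k = 0 := by
    intro i
    have := congrFun hv i
    simpa [Matrix.mulVec, dotProduct] using this
  have h1 : ∀ i, ∑ k, ((Θ i k).re * a k - (Θ i k).im * b k) = 0 := by
    intro i
    have h2 := congrArg Complex.re (hvi i)
    simpa [Complex.mul_re, ha, hb] using h2
  have h2 : ∀ i, ∑ k, ((Θ i k).re * b k + (Θ i k).im * a k) = 0 := by
    intro i
    have h3 := congrArg Complex.im (hvi i)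
    simpa [Complex.mul_im, ha, hb] using h3
  have h1' : ∀ i, ∑ k, (Θ i k).re * a k = ∑ k, (Θ i k).im * b k := by
    intro i
    have := h1 i
    rw [Finset.sum_sub_distrib] at this
    linarith
  have h2' : ∀ i, ∑ k, (Θ i k).re * b k = -∑ k, (Θ i k).im * a k := by
    intro i
    have := h2 i
    rw [Finset.sum_add_distrib] at this
    linarith
  have hswap : ∑ i, a i * ∑ k, (Θ i k).im * b k = ∑ i, b i * ∑ k, (Θ i k).im * a k := by
    simp_rw [Finset.mul_sum]
    rw [Finset.sum_comm]
    refine Finset.sum_congr rfl fun k _ => Finset.sum_congr rfl fun i _ => ?_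
    rw [hsymY i k]
    ring
  have hzero : (∑ i, a i * ∑ k, (Θ i k).re * a k) + (∑ i, b i * ∑ k, (Θ i k).re * b k) = 0 := by
    have e1 : ∑ i, a i * ∑ k, (Θ i k).re * a k = ∑ i, a i * ∑ k, (Θ i k).im * b k :=
      Finset.sum_congr rfl fun i _ => by rw [h1' i]
    have e2 : ∑ i, b i * ∑ k, (Θ i k).re * b k = -∑ i, b i * ∑ k, (Θ i k).im * a k := by
      rw [← Finset.sum_neg_distrib]
      refine Finset.sum_congr rfl fun i _ => ?_
      rw [h2' i]
      ring
    rw [e1, e2, hswap]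
    ring
  have hdot : ∀ w : Fin n → ℝ, dotProduct (star w) ((Θ.map Complex.re) *ᵥ w)
      = ∑ i, w i * ∑ k, (Θ i k).re * w k := by
    intro w
    simp [dotProduct, Matrix.mulVec, Matrix.map_apply, star_trivial]
  have hab : a ≠ 0 ∨ b ≠ 0 := by
    by_contra hc
    push_neg at hc
    apply hv0
    funext i
    have h3 := congrFun hc.1 i
    have h4 := congrFun hc.2 i
    simp only [ha, hb, Pi.zero_apply] at h3 h4
    exact Complex.ext h3 h4
  have hqa : 0 ≤ ∑ i, a i * ∑ k, (Θ i k).re * a k := by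
    rw [← hdot]
    exact hpd.posSemidef.dotProduct_mulVec_nonneg a
  have hqb : 0 ≤ ∑ i, b i * ∑ k, (Θ i k).re * b k := by
    rw [← hdot]
    exact hpd.posSemidef.dotProduct_mulVec_nonneg b
  rcases hab with hA | hB
  · have := hpd.dotProduct_mulVec_pos hA
    rw [hdot] at this
    linarith
  · have := hpd.dotProduct_mulVec_pos hB
    rw [hdot] at this
    linarith

lemma sqrt2_sq : (Real.sqrt 2 : ℂ) * (Real.sqrt 2 : ℂ) = 2 := by
  rw [← Complex.ofReal_mul, Real.mul_self_sqrt (by norm_num : (0:ℝ) ≤ 2)]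
  norm_num

lemma sqrt2_ne : (Real.sqrt 2 : ℂ) ≠ 0 := by
  intro h
  rw [← Complex.ofReal_zero] at h
  have := Complex.ofReal_injective h
  have h2 := Real.sqrt_pos.2 (by norm_num : (0:ℝ) < 2)
  linarith

lemma dot_eq (A : Matrix (Fin n) (Fin n) ℂ) (z : Fin n → ℂ) :
    z ⬝ᵥ A.mulVec z = eval z (qp A) := by
  rw [eval_qp]
  simp only [dotProduct, Matrix.mulVec, Finset.mul_sum]
  exact Finset.sum_congr rfl fun i _ => Finset.sum_congr rfl fun k _ => by ring

lemma qp_scale (A : Matrix (Fin n) (Fin n) ℂ) (z : Fin n → ℂ) :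
    eval (fun i => (Real.sqrt 2 : ℂ) * z i) (qp A) = 2 * eval z (qp A) := by
  rw [eval_qp, eval_qp, Finset.mul_sum]
  refine Finset.sum_congr rfl fun i _ => ?_
  rw [Finset.mul_sum]
  refine Finset.sum_congr rfl fun k _ => ?_
  linear_combination (A i k * z i * z k) * sqrt2_sq

lemma qp_para (A : Matrix (Fin n) (Fin n) ℂ) (r s : Fin n → ℂ) :
    eval (r + s) (qp A) + eval (r - s) (qp A) = 2 * eval r (qp A) + 2 * eval s (qp A) := by
  simp only [eval_qp, Pi.add_apply, Pi.sub_apply, Finset.mul_sum]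
  rw [← Finset.sum_add_distrib, ← Finset.sum_add_distrib]
  refine Finset.sum_congr rfl fun i _ => ?_
  rw [← Finset.sum_add_distrib, ← Finset.sum_add_distrib]
  refine Finset.sum_congr rfl fun k _ => ?_
  ring

lemma HG_eq (Θ : Matrix (Fin n) (Fin n) ℂ) (ν : Fin n → ℕ) (r : Fin n → ℂ) :
    AHGPaper.HG Θ ν r =
      (-(1 / (Real.sqrt 2 : ℂ))) ^ (∑ j, ν j) *
        ((∏ j, ((ν j).factorial : ℂ)) ^ (-(1 / 2 : ℂ))) *
        (((Real.pi : ℂ) ^ n * Θ.det) ^ (-(1 / 4 : ℂ))) *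
        eval r (Pf Θ⁻¹ ν) * Complex.exp (-((1 / 2 : ℂ) * eval r (qp Θ⁻¹))) := by
  rw [AHGPaper.HG]
  have hfun : (fun x : Fin n → ℂ => Complex.exp (-(x ⬝ᵥ Θ⁻¹.mulVec x))) =
      fun x => Complex.exp (-(eval x (qp Θ⁻¹))) := by
    funext x
    rw [dot_eq]
  rw [hfun, mpderiv_eq, dot_eq]
  have he : Complex.exp ((1 / 2 : ℂ) * eval r (qp Θ⁻¹)) * Complex.exp (-(eval r (qp Θ⁻¹)))
      = Complex.exp (-((1 / 2 : ℂ) * eval r (qp Θ⁻¹))) := by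
    rw [← Complex.exp_add]
    congr 1
    ring
  linear_combination ((-(1 / (Real.sqrt 2 : ℂ))) ^ (∑ j, ν j) *
    ((∏ j, ((ν j).factorial : ℂ)) ^ (-(1 / 2 : ℂ))) *
    (((Real.pi : ℂ) ^ n * Θ.det) ^ (-(1 / 4 : ℂ))) * eval r (Pf Θ⁻¹ ν)) * he

lemma fact_combo (ν μ : Fin n → ℕ) (hμ : ∀ l, μ l ≤ ν l) :
    (Real.sqrt ((∏ l, (ν l).choose (μ l) : ℕ) : ℝ)) *
        (((∏ l, ((ν l - μ l).factorial) : ℕ) : ℝ) ^ (-(1/2) : ℝ)) *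
        (((∏ l, ((μ l).factorial) : ℕ) : ℝ) ^ (-(1/2) : ℝ))
      = ((∏ l, (ν l).choose (μ l) : ℕ) : ℝ) *
          (((∏ l, ((ν l).factorial) : ℕ) : ℝ) ^ (-(1/2) : ℝ)) := by
  have hfac : (∏ l, (ν l).choose (μ l)) * (∏ l, (μ l).factorial) * (∏ l, (ν l - μ l).factorial)
      = ∏ l, (ν l).factorial := by
    rw [← Finset.prod_mul_distrib, ← Finset.prod_mul_distrib]
    exact Finset.prod_congr rfl fun l _ => Nat.choose_mul_factorial_mul_factorial (hμ l)
  have hC : (0:ℝ) < ((∏ l, (ν l).choose (μ l) : ℕ) : ℝ) :=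
    Nat.cast_pos.2 (Finset.prod_pos fun l _ => Nat.choose_pos (hμ l))
  have hFd : (0:ℝ) < ((∏ l, (ν l - μ l).factorial : ℕ) : ℝ) :=
    Nat.cast_pos.2 (Finset.prod_pos fun l _ => Nat.factorial_pos _)
  have hFm : (0:ℝ) < ((∏ l, (μ l).factorial : ℕ) : ℝ) :=
    Nat.cast_pos.2 (Finset.prod_pos fun l _ => Nat.factorial_pos _)
  have hrp : ∀ x : ℝ, 0 ≤ x → x ^ (-(1/2) : ℝ) = (Real.sqrt x)⁻¹ := by
    intro x hx
    rw [Real.rpow_neg hx, ← Real.sqrt_eq_rpow]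
  rw [hrp _ hFd.le, hrp _ hFm.le, hrp _ (by positivity)]
  have hsq : Real.sqrt ((∏ l, (ν l).factorial : ℕ) : ℝ)
      = Real.sqrt ((∏ l, (ν l).choose (μ l) : ℕ) : ℝ) *
        Real.sqrt ((∏ l, (μ l).factorial : ℕ) : ℝ) *
        Real.sqrt ((∏ l, (ν l - μ l).factorial : ℕ) : ℝ) := by
    rw [← hfac]
    push_cast
    rw [Real.sqrt_mul (by positivity), Real.sqrt_mul (by positivity)]
  rw [hsq]
  have h1 : Real.sqrt ((∏ l, (ν l).choose (μ l) : ℕ) : ℝ) ≠ 0 := by positivity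
  have h2 : Real.sqrt ((∏ l, (μ l).factorial : ℕ) : ℝ) ≠ 0 := by positivity
  have h3 : Real.sqrt ((∏ l, (ν l - μ l).factorial : ℕ) : ℝ) ≠ 0 := by positivity
  field_simp
  have p1 : (0:ℝ) < ∏ i, ((ν i).choose (μ i) : ℝ) :=
    Finset.prod_pos fun l _ => by exact_mod_cast Nat.choose_pos (hμ l)
  have p2 : (0:ℝ) < ∏ i, (((μ i).factorial : ℝ)) :=
    Finset.prod_pos fun l _ => by exact_mod_cast Nat.factorial_pos _
  have p3 : (0:ℝ) < ∏ i, (((ν i - μ i).factorial : ℝ)) :=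
    Finset.prod_pos fun l _ => by exact_mod_cast Nat.factorial_pos _
  exact Real.sq_sqrt (Nat.cast_nonneg _)

lemma pow2_combo (N : ℕ) : (2:ℂ) ^ (-(N:ℂ)/2) * (Real.sqrt 2 : ℂ) ^ N = 1 := by
  have h1 : (2:ℂ) ^ (-(N:ℂ)/2) = (((2:ℝ) ^ (-(N:ℝ)/2) : ℝ) : ℂ) := by
    have h2 : ((-(N:ℝ)/2 : ℝ) : ℂ) = -(N:ℂ)/2 := by push_cast; ring
    rw [show ((2:ℂ)) = ((2:ℝ):ℂ) by norm_num, Complex.ofReal_cpow (by norm_num) (-(N:ℝ)/2), h2]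
    norm_num
  have h3 : (Real.sqrt 2 : ℂ) ^ N = ((Real.sqrt 2 ^ N : ℝ) : ℂ) := by
    rw [Complex.ofReal_pow]
  rw [h1, h3, ← Complex.ofReal_mul]
  have h4 : (2:ℝ) ^ (-(N:ℝ)/2) * Real.sqrt 2 ^ N = 1 := by
    have h5 : (2:ℝ) ^ ((N:ℝ)/2) = Real.sqrt 2 ^ N := by
      rw [show ((N:ℝ)/2) = (1/2)*(N:ℝ) by ring, Real.rpow_mul (by norm_num), Real.rpow_natCast,
        ← Real.sqrt_eq_rpow]
    rw [show (-(N:ℝ)/2) = -((N:ℝ)/2) by ring, Real.rpow_neg (by norm_num), h5]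
    have h6 : Real.sqrt 2 ^ N ≠ 0 := pow_ne_zero _ (by
      intro h
      have := Real.sqrt_pos.2 (by norm_num : (0:ℝ) < 2)
      linarith)
    field_simp
  rw [h4, Complex.ofReal_one]

lemma fact_cpow_eq (κ : Fin n → ℕ) :
    (∏ j, ((κ j).factorial : ℂ)) ^ (-(1 / 2 : ℂ)) =
      ((((∏ j, (κ j).factorial : ℕ) : ℝ) ^ (-(1/2) : ℝ) : ℝ) : ℂ) := by
  have h1 : (∏ j, ((κ j).factorial : ℂ)) = (((∏ j, (κ j).factorial : ℕ) : ℝ) : ℂ) := by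
    push_cast
    rfl
  have h2 : (-(1 / 2 : ℂ)) = ((-(1/2) : ℝ) : ℂ) := by norm_num
  rw [h1, h2, ← Complex.ofReal_cpow (by positivity)]

end AHGAux


open AHGPaper
open AHGPaper AHGAux MvPolynomial in
/-- AHG function with offseted argument. -/
theorem ahg_offset (n : ℕ) (hn : 1 ≤ n) (Θ : Matrix (Fin n) (Fin n) ℂ)
    (hsym : Θ.IsSymm) (hpd : (Θ.map Complex.re).PosDef)
    (ν : Fin n → ℕ) (r s : Fin n → ℂ) :
    HG Θ ν (r + s) =
      (2 : ℂ) ^ (-((∑ j, ν j : ℕ) : ℂ) / 2) *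
        ((Real.pi : ℂ) ^ n * Θ.det) ^ (1 / 4 : ℂ) *
        Complex.exp ((1 / 2 : ℂ) * ((r - s) ⬝ᵥ Θ⁻¹.mulVec (r - s))) *
        ∑ᶠ (μ : Fin n → ℕ) (_ : ∀ j, μ j ≤ ν j),
          (Real.sqrt ((∏ j, (ν j).choose (μ j) : ℕ) : ℝ) : ℂ) *
            HG Θ (fun j => ν j - μ j) (fun i => (Real.sqrt 2 : ℂ) * r i) *
            HG Θ μ (fun i => (Real.sqrt 2 : ℂ) * s i) := by
  classical
  have hdet : Θ.det ≠ 0 := det_ne_zero' Θ hsym hpd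
  have hZ : (Real.pi : ℂ) ^ n * Θ.det ≠ 0 :=
    mul_ne_zero (pow_ne_zero _ (by exact_mod_cast Real.pi_ne_zero)) hdet
  set A := Θ⁻¹ with hA
  -- convert the finsum into a Finset sum
  have hfin : (∑ᶠ (μ : Fin n → ℕ) (_ : ∀ j, μ j ≤ ν j),
      (Real.sqrt ((∏ j, (ν j).choose (μ j) : ℕ) : ℝ) : ℂ) *
        HG Θ (fun j => ν j - μ j) (fun i => (Real.sqrt 2 : ℂ) * r i) *
        HG Θ μ (fun i => (Real.sqrt 2 : ℂ) * s i))
      = ∑ μ ∈ Finset.Iic ν,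
          (Real.sqrt ((∏ j, (ν j).choose (μ j) : ℕ) : ℝ) : ℂ) *
            HG Θ (fun j => ν j - μ j) (fun i => (Real.sqrt 2 : ℂ) * r i) *
            HG Θ μ (fun i => (Real.sqrt 2 : ℂ) * s i) := by
    rw [← finsum_mem_coe_finset]
    apply finsum_congr
    intro μ
    refine finsum_congr_Prop ?_ (fun _ => rfl)
    apply propext
    constructor
    · intro h
      exact Finset.mem_coe.2 (Finset.mem_Iic.2 fun j => h j)
    · intro h j
      exact Finset.mem_Iic.1 (Finset.mem_coe.1 h) j
  rw [hfin]
  rw [HG_eq]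
  have hdotrs : ((r - s) ⬝ᵥ Θ⁻¹.mulVec (r - s)) = eval (r - s) (qp A) := dot_eq A (r - s)
  rw [hdotrs]
  set N := ∑ j, ν j with hN
  -- per-term rewriting
  have hterm : ∀ μ ∈ Finset.Iic ν,
      (Real.sqrt ((∏ j, (ν j).choose (μ j) : ℕ) : ℝ) : ℂ) *
          HG Θ (fun j => ν j - μ j) (fun i => (Real.sqrt 2 : ℂ) * r i) *
          HG Θ μ (fun i => (Real.sqrt 2 : ℂ) * s i)
        = ((-(1 / (Real.sqrt 2 : ℂ))) ^ N *
            ((∏ j, ((ν j).factorial : ℂ)) ^ (-(1 / 2 : ℂ))) *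
            (((Real.pi : ℂ) ^ n * Θ.det) ^ (-(1 / 4 : ℂ))) *
            (((Real.pi : ℂ) ^ n * Θ.det) ^ (-(1 / 4 : ℂ))) *
            Complex.exp (-(eval r (qp A))) * Complex.exp (-(eval s (qp A)))) *
          ((((∏ j, (ν j).choose (μ j) : ℕ)) : ℂ) *
            eval (fun i => (Real.sqrt 2 : ℂ) * r i) (Pf A (fun m => ν m - μ m)) *
            eval (fun i => (Real.sqrt 2 : ℂ) * s i) (Pf A μ)) := by
    intro μ hμ
    have hle : ∀ l, μ l ≤ ν l := fun l => Finset.mem_Iic.1 hμ l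
    rw [HG_eq, HG_eq]
    rw [qp_scale, qp_scale]
    have he1 : Complex.exp (-((1/2:ℂ) * (2 * eval r (qp A)))) = Complex.exp (-(eval r (qp A))) := by
      congr 1; ring
    have he2 : Complex.exp (-((1/2:ℂ) * (2 * eval s (qp A)))) = Complex.exp (-(eval s (qp A))) := by
      congr 1; ring
    rw [he1, he2]
    have hσ : (-(1 / (Real.sqrt 2 : ℂ))) ^ (∑ j, (ν j - μ j)) *
        (-(1 / (Real.sqrt 2 : ℂ))) ^ (∑ j, μ j) = (-(1 / (Real.sqrt 2 : ℂ))) ^ N := by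
      rw [← pow_add]
      congr 1
      rw [← Finset.sum_add_distrib, hN]
      exact Finset.sum_congr rfl fun l _ => by have := hle l; omega
    have hFcombo : (Real.sqrt ((∏ j, (ν j).choose (μ j) : ℕ) : ℝ) : ℂ) *
        ((∏ j, (((ν j - μ j).factorial : ℂ))) ^ (-(1 / 2 : ℂ))) *
        ((∏ j, (((μ j).factorial : ℂ))) ^ (-(1 / 2 : ℂ)))
        = (((∏ j, (ν j).choose (μ j) : ℕ)) : ℂ) *
            ((∏ j, (((ν j).factorial : ℂ))) ^ (-(1 / 2 : ℂ))) := by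
      rw [fact_cpow_eq, fact_cpow_eq, fact_cpow_eq]
      rw [← Complex.ofReal_mul, ← Complex.ofReal_mul]
      rw [fact_combo ν μ hle]
      push_cast
      ring
    calc (Real.sqrt ((∏ j, (ν j).choose (μ j) : ℕ) : ℝ) : ℂ) *
          ((-(1 / (Real.sqrt 2 : ℂ))) ^ (∑ j, (ν j - μ j)) *
            ((∏ j, (((ν j - μ j).factorial : ℂ))) ^ (-(1 / 2 : ℂ))) *
            (((Real.pi : ℂ) ^ n * Θ.det) ^ (-(1 / 4 : ℂ))) *
            eval (fun i => (Real.sqrt 2 : ℂ) * r i) (Pf A (fun m => ν m - μ m)) *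
            Complex.exp (-(eval r (qp A)))) *
          ((-(1 / (Real.sqrt 2 : ℂ))) ^ (∑ j, μ j) *
            ((∏ j, (((μ j).factorial : ℂ))) ^ (-(1 / 2 : ℂ))) *
            (((Real.pi : ℂ) ^ n * Θ.det) ^ (-(1 / 4 : ℂ))) *
            eval (fun i => (Real.sqrt 2 : ℂ) * s i) (Pf A μ) *
            Complex.exp (-(eval s (qp A))))
        = ((-(1 / (Real.sqrt 2 : ℂ))) ^ (∑ j, (ν j - μ j)) *
            (-(1 / (Real.sqrt 2 : ℂ))) ^ (∑ j, μ j)) *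
          ((Real.sqrt ((∏ j, (ν j).choose (μ j) : ℕ) : ℝ) : ℂ) *
            ((∏ j, (((ν j - μ j).factorial : ℂ))) ^ (-(1 / 2 : ℂ))) *
            ((∏ j, (((μ j).factorial : ℂ))) ^ (-(1 / 2 : ℂ)))) *
          ((((Real.pi : ℂ) ^ n * Θ.det) ^ (-(1 / 4 : ℂ))) *
            (((Real.pi : ℂ) ^ n * Θ.det) ^ (-(1 / 4 : ℂ))) *
            Complex.exp (-(eval r (qp A))) * Complex.exp (-(eval s (qp A))) *
            (eval (fun i => (Real.sqrt 2 : ℂ) * r i) (Pf A (fun m => ν m - μ m)) *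
              eval (fun i => (Real.sqrt 2 : ℂ) * s i) (Pf A μ))) := by ring
      _ = ((-(1 / (Real.sqrt 2 : ℂ))) ^ N) *
          ((((∏ j, (ν j).choose (μ j) : ℕ)) : ℂ) *
            ((∏ j, (((ν j).factorial : ℂ))) ^ (-(1 / 2 : ℂ)))) *
          ((((Real.pi : ℂ) ^ n * Θ.det) ^ (-(1 / 4 : ℂ))) *
            (((Real.pi : ℂ) ^ n * Θ.det) ^ (-(1 / 4 : ℂ))) *
            Complex.exp (-(eval r (qp A))) * Complex.exp (-(eval s (qp A))) *
            (eval (fun i => (Real.sqrt 2 : ℂ) * r i) (Pf A (fun m => ν m - μ m)) *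
              eval (fun i => (Real.sqrt 2 : ℂ) * s i) (Pf A μ))) := by rw [hσ, hFcombo]
      _ = _ := by ring
  rw [Finset.sum_congr rfl hterm, ← Finset.mul_sum]
  have hkey := key A N ν hN.symm r s
  rw [← hkey]
  -- remaining scalar identity
  have hP := pow2_combo N
  have hZZ : ((Real.pi : ℂ) ^ n * Θ.det) ^ (1 / 4 : ℂ) *
      ((Real.pi : ℂ) ^ n * Θ.det) ^ (-(1 / 4 : ℂ)) = 1 := by
    rw [← Complex.cpow_add _ _ hZ]
    norm_num
  have hE : Complex.exp ((1 / 2 : ℂ) * eval (r - s) (qp A)) *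
      (Complex.exp (-(eval r (qp A))) * Complex.exp (-(eval s (qp A))))
      = Complex.exp (-((1 / 2 : ℂ) * eval (r + s) (qp A))) := by
    rw [← Complex.exp_add, ← Complex.exp_add]
    congr 1
    linear_combination (1/2 : ℂ) * qp_para A r s
  calc (-(1 / (Real.sqrt 2 : ℂ))) ^ N * ((∏ j, ((ν j).factorial : ℂ)) ^ (-(1 / 2 : ℂ))) *
        (((Real.pi : ℂ) ^ n * Θ.det) ^ (-(1 / 4 : ℂ))) * eval (r + s) (Pf A ν) *
        Complex.exp (-((1 / 2 : ℂ) * eval (r + s) (qp A)))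
      = (-(1 / (Real.sqrt 2 : ℂ))) ^ N * ((∏ j, ((ν j).factorial : ℂ)) ^ (-(1 / 2 : ℂ))) *
        (((Real.pi : ℂ) ^ n * Θ.det) ^ (-(1 / 4 : ℂ))) * eval (r + s) (Pf A ν) *
        Complex.exp (-((1 / 2 : ℂ) * eval (r + s) (qp A))) *
        ((2 : ℂ) ^ (-(N : ℂ) / 2) * (Real.sqrt 2 : ℂ) ^ N) *
        (((Real.pi : ℂ) ^ n * Θ.det) ^ (1 / 4 : ℂ) *
          ((Real.pi : ℂ) ^ n * Θ.det) ^ (-(1 / 4 : ℂ))) := by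
        rw [hP, hZZ]; ring
    _ = (2 : ℂ) ^ (-(N : ℂ) / 2) * ((Real.pi : ℂ) ^ n * Θ.det) ^ (1 / 4 : ℂ) *
        (Complex.exp ((1 / 2 : ℂ) * eval (r - s) (qp A)) *
          (Complex.exp (-(eval r (qp A))) * Complex.exp (-(eval s (qp A))))) *
        ((-(1 / (Real.sqrt 2 : ℂ))) ^ N * ((∏ j, ((ν j).factorial : ℂ)) ^ (-(1 / 2 : ℂ))) *
          (((Real.pi : ℂ) ^ n * Θ.det) ^ (-(1 / 4 : ℂ))) *
          (((Real.pi : ℂ) ^ n * Θ.det) ^ (-(1 / 4 : ℂ))) *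
          (Real.sqrt 2 : ℂ) ^ N * eval (r + s) (Pf A ν)) := by
        rw [hE]; ring
    _ = _ := by ring
end
end
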